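/- arXiv:1202.0305 — 7 statements merged into one kernel-verified Lean document; each statement's English description precedes it below -/
import Mathlib

section
/- Let m, m_t, m_r be natural numbers with m_t ≤ m, m_r ≤ m and m_t + m_r ≥ m, and let H be an m×m complex unitary matrix. Then the characteristic polynomial of H₁₁ᴴ·H₁₁ factors as charpoly(H₁₁ᴴ·H₁₁) = (X − 1)^(m_t+m_r−m) · charpoly(H₂₂·H₂₂ᴴ). (In particular, m_t+m_r−m of the eigenvalues of H₁₁ᴴ·H₁₁ are equal to 1 and the remaining m−m_r eigenvalues coincide, with multiplicity, with the eigenvalues of H₂₂·H₂₂ᴴ.) -/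
open Matrix Polynomial

noncomputable section

/-- The upper-left `m_r × m_t` block of an `m × m` matrix
(first `m_r` rows and first `m_t` columns). -/
def sub11 {m : ℕ} (mt mr : ℕ) (hmt : mt ≤ m) (hmr : mr ≤ m)
    (H : Matrix (Fin m) (Fin m) ℂ) : Matrix (Fin mr) (Fin mt) ℂ :=
  Matrix.of fun i j => H (Fin.castLE hmr i) (Fin.castLE hmt j)

/-- The lower-right `(m−m_r) × (m−m_t)` block of an `m × m` matrix
(last `m−m_r` rows and last `m−m_t` columns). -/
def sub22 {m : ℕ} (mt mr : ℕ) (H : Matrix (Fin m) (Fin m) ℂ) :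
    Matrix (Fin (m - mr)) (Fin (m - mt)) ℂ :=
  Matrix.of fun i j => H ⟨mr + i, by omega⟩ ⟨mt + j, by omega⟩

def sub21aux {m : ℕ} (mt mr : ℕ) (hmt : mt ≤ m) (H : Matrix (Fin m) (Fin m) ℂ) :
    Matrix (Fin (m - mr)) (Fin mt) ℂ :=
  Matrix.of fun i j => H ⟨mr + i, by omega⟩ (Fin.castLE hmt j)


lemma sum_split_aux {M : Type*} [AddCommMonoid M] {m k : ℕ} (hk : k ≤ m) (f : Fin m → M) :
    ∑ i, f i = (∑ i : Fin k, f (Fin.castLE hk i)) + ∑ i : Fin (m - k), f ⟨k + i, by omega⟩ := by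
  have h : k + (m - k) = m := by omega
  have := Fintype.sum_bijective (finCongr h) (finCongr h).bijective
    (fun i : Fin (k + (m - k)) => f (finCongr h i)) f (fun _ => rfl)
  rw [← this, Fin.sum_univ_add]
  rfl

lemma charpoly_units_conj {k : Type*} [DecidableEq k] [Fintype k] {R : Type*} [CommRing R]
    (P : (Matrix k k R)ˣ) (A : Matrix k k R) :
    ((P : Matrix k k R) * A * (↑P⁻¹ : Matrix k k R)).charpoly = A.charpoly := by
  let f : Matrix k k R →+* Matrix k k R[X] := (C : R →+* R[X]).mapMatrix
  have hPP : f (P : Matrix k k R) * f (↑P⁻¹ : Matrix k k R) = 1 := by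
    rw [← _root_.map_mul, Units.mul_inv, _root_.map_one]
  have h1 : charmatrix ((P : Matrix k k R) * A * (↑P⁻¹ : Matrix k k R))
      = f (P : Matrix k k R) * charmatrix A * f (↑P⁻¹ : Matrix k k R) := by
    rw [charmatrix, charmatrix, mul_sub, sub_mul]
    congr 1
    · rw [scalar_apply, ← smul_one_eq_diagonal, Matrix.mul_smul, mul_one, Matrix.smul_mul, hPP,
        smul_one_eq_diagonal]
    · simp only [f, _root_.map_mul]
  rw [Matrix.charpoly, h1, det_mul, det_mul, mul_right_comm, ← det_mul, hPP, det_one, one_mul,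
    Matrix.charpoly]

lemma charpoly_zero_mat (k : Type*) [DecidableEq k] [Fintype k] {R : Type*} [CommRing R] :
    (0 : Matrix k k R).charpoly = X ^ Fintype.card k := by
  rw [Matrix.charpoly, charmatrix, map_zero, sub_zero, scalar_apply, det_diagonal,
    Finset.prod_const, Finset.card_univ]

lemma charpoly_mul_comm_rect {p n : ℕ} (U : Matrix (Fin p) (Fin n) ℂ)
    (V : Matrix (Fin n) (Fin p) ℂ) :
    (U * V).charpoly * X ^ n = X ^ p * (V * U).charpoly := by
  classical
  set Pm : Matrix (Fin p ⊕ Fin n) (Fin p ⊕ Fin n) ℂ := fromBlocks 1 U 0 1 with hPm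
  set Qm : Matrix (Fin p ⊕ Fin n) (Fin p ⊕ Fin n) ℂ := fromBlocks 1 (-U) 0 1 with hQm
  have hQP : Qm * Pm = 1 := by
    simp [hPm, hQm, fromBlocks_multiply, Matrix.neg_mul, ← fromBlocks_one]
  have hPQ : Pm * Qm = 1 := by
    simp [hPm, hQm, fromBlocks_multiply, Matrix.neg_mul, ← fromBlocks_one]
  let Pu : (Matrix (Fin p ⊕ Fin n) (Fin p ⊕ Fin n) ℂ)ˣ := ⟨Qm, Pm, hQP, hPQ⟩
  have hcp : (Qm * (fromBlocks (U * V) 0 V 0) * Pm).charpoly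
      = (fromBlocks (U * V) 0 V (0 : Matrix (Fin n) (Fin n) ℂ)).charpoly :=
    charpoly_units_conj Pu (fromBlocks (U * V) 0 V 0)
  have hconj : Qm * (fromBlocks (U * V) 0 V 0) * Pm
      = fromBlocks 0 0 V (V * U) := by
    simp [hPm, hQm, fromBlocks_multiply, Matrix.neg_mul, Matrix.mul_assoc]
  rw [hconj] at hcp
  rw [Matrix.charpoly_fromBlocks_zero₁₂, Matrix.charpoly_fromBlocks_zero₁₂,
    charpoly_zero_mat, charpoly_zero_mat, Fintype.card_fin, Fintype.card_fin] at hcp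
  exact hcp.symm

lemma charpoly_comp_one_sub {k : Type*} [DecidableEq k] [Fintype k]
    (M : Matrix k k ℂ) :
    (M.charpoly).comp (1 - X) = (-1) ^ Fintype.card k * (1 - M).charpoly := by
  let φ : ℂ[X] →+* ℂ[X] := eval₂RingHom C (1 - X)
  have hcomp : (M.charpoly).comp (1 - X) = φ M.charpoly := rfl
  have hmap : φ.mapMatrix (charmatrix M) = -(charmatrix (1 - M)) := by
    ext i j : 2
    by_cases h : i = j
    · subst h
      simp only [RingHom.mapMatrix_apply, Matrix.map_apply, charmatrix_apply_eq,
        Matrix.neg_apply, Matrix.sub_apply, Matrix.one_apply_eq, φ,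
        coe_eval₂RingHom, eval₂_sub, eval₂_X, eval₂_C, map_sub, C_1]
      ring
    · simp only [RingHom.mapMatrix_apply, Matrix.map_apply, charmatrix_apply_ne _ _ _ h,
        Matrix.neg_apply, Matrix.sub_apply, Matrix.one_apply_ne h, φ,
        coe_eval₂RingHom, eval₂_neg, eval₂_C, zero_sub, map_neg, neg_neg]
  rw [hcomp, Matrix.charpoly, RingHom.map_det, hmap, det_neg, Matrix.charpoly]


/-- **Lemma 1 (deterministic part).** If `H` is an `m × m` unitary matrix with
`m_t ≤ m`, `m_r ≤ m` and `m_t + m_r ≥ m`, then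
`charpoly(H₁₁ᴴ H₁₁) = (X − 1)^(m_t+m_r−m) · charpoly(H₂₂ H₂₂ᴴ)`:
`m_t+m_r−m` eigenvalues of `H₁₁ᴴ H₁₁` equal `1` and the remaining ones coincide
with the eigenvalues of `H₂₂ H₂₂ᴴ`. -/
theorem charpoly_sub11_eq_of_unitary (m mt mr : ℕ) (hmt : mt ≤ m) (hmr : mr ≤ m)
    (hsum : m ≤ mt + mr) (H : Matrix (Fin m) (Fin m) ℂ) (hH : Hᴴ * H = 1) :
    ((sub11 mt mr hmt hmr H)ᴴ * sub11 mt mr hmt hmr H).charpoly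
      = (X - 1) ^ (mt + mr - m) * (sub22 mt mr H * (sub22 mt mr H)ᴴ).charpoly := by
  set A := sub11 mt mr hmt hmr H with hAdef
  set B := sub21aux mt mr hmt H with hBdef
  set Cm := sub22 mt mr H with hCdef
  have hqp : mt = (mt + mr - m) + (m - mr) := by omega
  have key1 : Aᴴ * A + Bᴴ * B = 1 := by
    ext j k
    have h := congrFun (congrFun hH (Fin.castLE hmt j)) (Fin.castLE hmt k)
    rw [Matrix.mul_apply] at h
    simp only [Matrix.conjTranspose_apply] at h
    rw [sum_split_aux hmr
      (fun i => star (H i (Fin.castLE hmt j)) * H i (Fin.castLE hmt k))] at h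
    have h1jk : (1 : Matrix (Fin m) (Fin m) ℂ) (Fin.castLE hmt j) (Fin.castLE hmt k)
        = (1 : Matrix (Fin mt) (Fin mt) ℂ) j k := by
      by_cases hjk : j = k
      · subst hjk; simp
      · rw [Matrix.one_apply_ne, Matrix.one_apply_ne hjk]
        exact fun hc => hjk (by simpa [Fin.ext_iff] using hc)
    rw [Matrix.add_apply, Matrix.mul_apply, Matrix.mul_apply]
    simp only [Matrix.conjTranspose_apply, hAdef, hBdef, sub11, sub21aux, Matrix.of_apply]
    rw [h, h1jk]
  have hH' : H * Hᴴ = 1 := mul_eq_one_comm.mp hH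
  have key2 : B * Bᴴ + Cm * Cmᴴ = 1 := by
    ext i i'
    have h := congrFun (congrFun hH' ⟨mr + i, by omega⟩) ⟨mr + i', by omega⟩
    rw [Matrix.mul_apply] at h
    simp only [Matrix.conjTranspose_apply] at h
    rw [sum_split_aux hmt
      (fun j => H ⟨mr + i, by omega⟩ j * star (H ⟨mr + i', by omega⟩ j))] at h
    have h1ii : (1 : Matrix (Fin m) (Fin m) ℂ) ⟨mr + i, by omega⟩ ⟨mr + i', by omega⟩
        = (1 : Matrix (Fin (m - mr)) (Fin (m - mr)) ℂ) i i' := by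
      by_cases hii : i = i'
      · subst hii; simp
      · rw [Matrix.one_apply_ne, Matrix.one_apply_ne hii]
        intro hc
        exact hii (by simp only [Fin.mk.injEq] at hc; exact Fin.ext (by omega))
    rw [Matrix.add_apply, Matrix.mul_apply, Matrix.mul_apply]
    simp only [Matrix.conjTranspose_apply, hBdef, hCdef, sub21aux, sub22, Matrix.of_apply]
    rw [h, h1ii]
  have hA : Aᴴ * A = 1 - Bᴴ * B := eq_sub_of_add_eq key1
  have hC : Cm * Cmᴴ = 1 - B * Bᴴ := eq_sub_of_add_eq (by rwa [add_comm] at key2)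
  have hrect : (Bᴴ * B).charpoly = X ^ (mt + mr - m) * (B * Bᴴ).charpoly := by
    have hXp : (X : ℂ[X]) ^ (m - mr) ≠ 0 := pow_ne_zero _ X_ne_zero
    apply mul_left_cancel₀ hXp
    rw [← charpoly_mul_comm_rect B Bᴴ,
      show (X : ℂ[X]) ^ mt = X ^ (m - mr) * X ^ (mt + mr - m) by rw [← pow_add, show m - mr + (mt + mr - m) = mt from by omega]]
    ring
  have h1 := charpoly_comp_one_sub (Bᴴ * B)
  have h2 := charpoly_comp_one_sub (B * Bᴴ)
  rw [Fintype.card_fin, ← hA] at h1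
  rw [Fintype.card_fin, ← hC] at h2
  have hAch : (Aᴴ * A).charpoly = (-1) ^ mt * ((Bᴴ * B).charpoly).comp (1 - X) := by
    rw [h1, ← mul_assoc, ← mul_pow]
    simp
  rw [hAch, hrect, mul_comp, pow_comp, X_comp, h2,
    show ((-1 : ℂ[X])) ^ mt = (-1 : ℂ[X]) ^ (mt + mr - m) * (-1 : ℂ[X]) ^ (m - mr) by
      rw [← pow_add, show mt + mr - m + (m - mr) = mt from by omega]]
  have hpow : ((-1 : ℂ[X])) ^ (m - mr) * (-1 : ℂ[X]) ^ (m - mr) = 1 := by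
    rw [← mul_pow]; simp
  calc (-1 : ℂ[X]) ^ (mt + mr - m) * (-1 : ℂ[X]) ^ (m - mr) *
        ((1 - X) ^ (mt + mr - m) * ((-1) ^ (m - mr) * (Cm * Cmᴴ).charpoly))
      = ((-1 : ℂ[X]) * (1 - X)) ^ (mt + mr - m) *
        (((-1 : ℂ[X]) ^ (m - mr) * (-1 : ℂ[X]) ^ (m - mr)) * (Cm * Cmᴴ).charpoly) := by
        rw [mul_pow]; ring
    _ = (X - 1) ^ (mt + mr - m) * (Cm * Cmᴴ).charpoly := by
        rw [hpow, one_mul, neg_one_mul, neg_sub]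
end
end

section
/- Let m, m_t, m_r be natural numbers with m_t ≤ m and m_r ≤ m, and let H be an m×m complex unitary matrix. Then the squared Frobenius norm of H₁₁ satisfies ∑_{i<m_r} ∑_{j<m_t} |H i j|² ≥ m_t + m_r − m (as real numbers; the bound is vacuous when m_t + m_r ≤ m). In particular, when m_t+m_r > m the channel power ‖H₁₁‖_F² is guaranteed to be at least m_t+m_r−m for every realization of H. -/
open Matrix

/-- The squared Frobenius norm of the `m_r × m_t` upper-left block of an `m × m`
unitary matrix is at least `m_t + m_r − m`. -/
theorem frobenius_sq_sub11_ge (m mt mr : ℕ) (hmt : mt ≤ m) (hmr : mr ≤ m)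
    (H : Matrix (Fin m) (Fin m) ℂ) (hH : Hᴴ * H = 1) :
    (mt : ℝ) + (mr : ℝ) - (m : ℝ)
      ≤ ∑ i : Fin mr, ∑ j : Fin mt, ‖H (Fin.castLE hmr i) (Fin.castLE hmt j)‖ ^ 2 := by
  classical
  have hH' : H * Hᴴ = 1 := mul_eq_one_comm.mp hH
  -- column norms
  have hcol : ∀ j : Fin m, ∑ i : Fin m, ‖H i j‖ ^ 2 = 1 := by
    intro j
    have h1 := congrFun (congrFun hH j) j
    simp only [Matrix.mul_apply, Matrix.conjTranspose_apply, Matrix.one_apply_eq] at h1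
    have := congrArg Complex.re h1
    simpa [Complex.re_sum, ← Complex.normSq_eq_norm_sq, Complex.normSq_eq_conj_mul_self,
      Complex.sq_norm, Complex.normSq_apply] using this
  have hrow : ∀ i : Fin m, ∑ j : Fin m, ‖H i j‖ ^ 2 = 1 := by
    intro i
    have h1 := congrFun (congrFun hH' i) i
    simp only [Matrix.mul_apply, Matrix.conjTranspose_apply, Matrix.one_apply_eq] at h1
    have := congrArg Complex.re h1
    simpa [Complex.re_sum, Complex.mul_conj, Complex.sq_norm] using this
  set A : Finset (Fin m) := Finset.univ.map (Fin.castLEEmb hmr) with hAdef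
  set B : Finset (Fin m) := Finset.univ.map (Fin.castLEEmb hmt) with hBdef
  have hAcard : A.card = mr := by simp [hAdef]
  have hBcard : B.card = mt := by simp [hBdef]
  have hrhs : (∑ i : Fin mr, ∑ j : Fin mt, ‖H (Fin.castLE hmr i) (Fin.castLE hmt j)‖ ^ 2)
      = ∑ i ∈ A, ∑ j ∈ B, ‖H i j‖ ^ 2 := by
    rw [hAdef, hBdef, Finset.sum_map]
    refine Finset.sum_congr rfl fun i _ => ?_
    rw [Finset.sum_map]
    rfl
  rw [hrhs]
  have key : ∑ i ∈ A, ∑ j ∈ B, ‖H i j‖ ^ 2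
      = (mt : ℝ) - ∑ i ∈ Aᶜ, ∑ j ∈ B, ‖H i j‖ ^ 2 := by
    rw [Finset.sum_comm, Finset.sum_comm (s := Aᶜ)]
    rw [eq_sub_iff_add_eq, ← Finset.sum_add_distrib]
    have : ∀ j ∈ B, (∑ i ∈ A, ‖H i j‖ ^ 2) + ∑ i ∈ Aᶜ, ‖H i j‖ ^ 2 = 1 := by
      intro j _
      rw [Finset.sum_add_sum_compl]
      exact hcol j
    rw [Finset.sum_congr rfl this]
    simp [hBcard]
  rw [key]
  have hle : ∑ i ∈ Aᶜ, ∑ j ∈ B, ‖H i j‖ ^ 2 ≤ (m : ℝ) - mr := by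
    have h1 : ∀ i ∈ Aᶜ, ∑ j ∈ B, ‖H i j‖ ^ 2 ≤ 1 := by
      intro i _
      calc ∑ j ∈ B, ‖H i j‖ ^ 2 ≤ ∑ j : Fin m, ‖H i j‖ ^ 2 :=
            Finset.sum_le_sum_of_subset_of_nonneg (Finset.subset_univ _)
              (fun j _ _ => sq_nonneg _)
        _ = 1 := hrow i
    calc ∑ i ∈ Aᶜ, ∑ j ∈ B, ‖H i j‖ ^ 2 ≤ ∑ i ∈ Aᶜ, (1 : ℝ) :=
          Finset.sum_le_sum h1
      _ = (m : ℝ) - mr := by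
          rw [Finset.sum_const, Finset.card_compl, hAcard]
          simp [Nat.cast_sub hmr]
  linarith
end

section
/- (Theorem 2: ergodic capacity for m_t+m_r > m.) Let m, m_t, m_r be natural numbers with m_t ≤ m, m_r ≤ m and m_t + m_r ≥ m, and let ρ ≥ 0 be a real number. Then ∫_{U(m)} log |det(I_{m_t} + ρ·H₁₁ᴴ·H₁₁)| dμ(H) = (m_t+m_r−m)·log(1+ρ) + ∫_{U(m)} log |det(I_{m−m_r} + ρ·H₂₂·H₂₂ᴴ)| dμ(H); that is, the ergodic capacity equals m_t+m_r−m times the SISO capacity log(1+ρ) plus the ergodic capacity of a Jacobi channel with m−m_r transmit and m−m_t receive modes. -/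
open Matrix MeasureTheory

noncomputable section

instance (m : ℕ) : MeasurableSpace (Matrix.unitaryGroup (Fin m) ℂ) := borel _
instance (m : ℕ) : BorelSpace (Matrix.unitaryGroup (Fin m) ℂ) := ⟨rfl⟩

/-- The lower-left `(m−m_r) × m_t` block. -/
def sub21 {m : ℕ} (mt mr : ℕ) (hmt : mt ≤ m) (hmr : mr ≤ m)
    (H : Matrix (Fin m) (Fin m) ℂ) : Matrix (Fin (m - mr)) (Fin mt) ℂ :=
  Matrix.of fun i j => H ⟨mr + i, by omega⟩ (Fin.castLE hmt j)

lemma sum_split {M : Type*} [AddCommMonoid M] {m mr : ℕ} (hmr : mr ≤ m) (f : Fin m → M) :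
    ∑ k, f k = ∑ k : Fin mr, f (Fin.castLE hmr k)
      + ∑ k : Fin (m - mr), f ⟨mr + k, by omega⟩ := by
  have h : mr + (m - mr) = m := by omega
  rw [← Fintype.sum_equiv (finCongr h) (fun k => f (finCongr h k)) f (fun k => rfl),
    Fin.sum_univ_add]
  congr 1

lemma blocks_col {m : ℕ} (mt mr : ℕ) (hmt : mt ≤ m) (hmr : mr ≤ m)
    (H : Matrix (Fin m) (Fin m) ℂ) (hU : Hᴴ * H = 1) :
    (sub11 mt mr hmt hmr H)ᴴ * sub11 mt mr hmt hmr H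
      + (sub21 mt mr hmt hmr H)ᴴ * sub21 mt mr hmt hmr H = 1 := by
  ext i j
  have h := congrFun (congrFun hU (Fin.castLE hmt i)) (Fin.castLE hmt j)
  simp only [Matrix.mul_apply, Matrix.conjTranspose_apply] at h
  simp only [sub11, sub21, Matrix.add_apply, Matrix.mul_apply,
    Matrix.conjTranspose_apply, Matrix.of_apply]
  rw [← sum_split hmr (fun k => star (H k (Fin.castLE hmt i)) * H k (Fin.castLE hmt j)), h]
  by_cases hij : i = j
  · subst hij; simp [Matrix.one_apply]
  · rw [Matrix.one_apply_ne hij, Matrix.one_apply_ne]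
    simpa [Fin.ext_iff] using fun h' => hij (Fin.ext h')

lemma blocks_row {m : ℕ} (mt mr : ℕ) (hmt : mt ≤ m) (hmr : mr ≤ m)
    (H : Matrix (Fin m) (Fin m) ℂ) (hU : H * Hᴴ = 1) :
    sub21 mt mr hmt hmr H * (sub21 mt mr hmt hmr H)ᴴ
      + sub22 mt mr H * (sub22 mt mr H)ᴴ = 1 := by
  ext i j
  have h := congrFun (congrFun hU (⟨mr + i, by omega⟩ : Fin m)) ⟨mr + j, by omega⟩
  simp only [Matrix.mul_apply, Matrix.conjTranspose_apply] at h
  simp only [sub21, sub22, Matrix.add_apply, Matrix.mul_apply,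
    Matrix.conjTranspose_apply, Matrix.of_apply]
  rw [← sum_split hmt (fun k =>
    H ⟨mr + i, by omega⟩ k * star (H ⟨mr + j, by omega⟩ k)), h]
  by_cases hij : i = j
  · subst hij; simp [Matrix.one_apply]
  · rw [Matrix.one_apply_ne hij, Matrix.one_apply_ne]
    simpa [Fin.ext_iff] using fun h' => hij (Fin.ext (by omega))

lemma det_key {a b p q : ℕ} (hba : b ≤ a)
    (A : Matrix (Fin p) (Fin a) ℂ) (B : Matrix (Fin b) (Fin a) ℂ)
    (C : Matrix (Fin b) (Fin q) ℂ)
    (hA : Aᴴ * A = 1 - Bᴴ * B) (hC : B * Bᴴ = 1 - C * Cᴴ) (ρ : ℝ) (hρ : 0 ≤ ρ) :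
    (1 + (ρ : ℂ) • (Aᴴ * A)).det
      = (1 + (ρ : ℂ)) ^ (a - b) * (1 + (ρ : ℂ) • (C * Cᴴ)).det := by
  set r : ℂ := (ρ : ℂ) with hr'
  have hr : (1 : ℂ) + r ≠ 0 := by
    have h0 : (1 + ρ : ℝ) ≠ 0 := by positivity
    have : ((1 + ρ : ℝ) : ℂ) = 1 + r := by push_cast; ring
    rw [← this]
    exact_mod_cast h0
  set t : ℂ := r / (1 + r) with ht'
  have e1 : (1 : Matrix (Fin a) (Fin a) ℂ) + r • (Aᴴ * A)
      = (1 + r) • ((1 : Matrix (Fin a) (Fin a) ℂ) + Bᴴ * ((-t) • B)) := by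
    have h1 : (1 + r) * (-t) = -r := by rw [ht']; field_simp
    rw [hA, Matrix.mul_smul, smul_add, smul_smul, h1]
    module
  have e2 : (1 : Matrix (Fin b) (Fin b) ℂ) + ((-t) • B) * Bᴴ
      = (1 - t) • ((1 : Matrix (Fin b) (Fin b) ℂ) + r • (C * Cᴴ)) := by
    have h2 : (1 - t) * r = t := by rw [ht']; field_simp; ring
    rw [Matrix.smul_mul, hC, smul_add, smul_smul, h2]
    module
  have h3 : (1 - t) = (1 + r)⁻¹ := by rw [ht']; field_simp; ring
  calc (1 + r • (Aᴴ * A)).det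
      = ((1 + r) • ((1 : Matrix (Fin a) (Fin a) ℂ) + Bᴴ * ((-t) • B))).det := by rw [e1]
    _ = (1 + r) ^ a * ((1 : Matrix (Fin a) (Fin a) ℂ) + Bᴴ * ((-t) • B)).det := by
        rw [Matrix.det_smul, Fintype.card_fin]
    _ = (1 + r) ^ a * ((1 : Matrix (Fin b) (Fin b) ℂ) + ((-t) • B) * Bᴴ).det := by
        rw [Matrix.det_one_add_mul_comm]
    _ = (1 + r) ^ a * ((1 - t) • ((1 : Matrix (Fin b) (Fin b) ℂ) + r • (C * Cᴴ))).det := by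
        rw [e2]
    _ = (1 + r) ^ a * ((1 - t) ^ b * (1 + r • (C * Cᴴ)).det) := by
        rw [Matrix.det_smul, Fintype.card_fin]
    _ = (1 + r) ^ (a - b) * (1 + r • (C * Cᴴ)).det := by
        rw [h3, ← mul_assoc, inv_pow, ← pow_sub₀ _ hr hba]

lemma unitary_entry_norm_le {m : ℕ} (H : Matrix (Fin m) (Fin m) ℂ)
    (hU : Hᴴ * H = 1) (i j : Fin m) : ‖H i j‖ ≤ 1 := by
  have h := congrFun (congrFun hU j) j
  simp only [Matrix.mul_apply, Matrix.conjTranspose_apply, Matrix.one_apply_eq] at h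
  have h2 : ∀ k : Fin m, star (H k j) * H k j = ((Complex.normSq (H k j) : ℝ) : ℂ) := by
    intro k
    rw [Complex.star_def, mul_comm, Complex.mul_conj]
  rw [Finset.sum_congr rfl (fun k _ => h2 k)] at h
  rw [← Complex.ofReal_sum] at h
  have h3 : ∑ k : Fin m, Complex.normSq (H k j) = 1 := by exact_mod_cast h
  have h4 : Complex.normSq (H i j) ≤ 1 := by
    rw [← h3]
    exact Finset.single_le_sum (f := fun k => Complex.normSq (H k j))
      (fun k _ => Complex.normSq_nonneg _) (Finset.mem_univ i)
  rw [← Complex.sq_norm] at h4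
  nlinarith [norm_nonneg (H i j)]

instance unitaryGroup_compact (m : ℕ) : CompactSpace (Matrix.unitaryGroup (Fin m) ℂ) := by
  have hsub : (Matrix.unitaryGroup (Fin m) ℂ : Set (Matrix (Fin m) (Fin m) ℂ)) ⊆
      Set.univ.pi fun _ : Fin m => Set.univ.pi fun _ : Fin m => Metric.closedBall (0 : ℂ) 1 := by
    intro H hH
    intro i _
    intro j _
    simp only [Metric.mem_closedBall, dist_zero_right]
    exact unitary_entry_norm_le H hH.1 i j
  have hcpt : IsCompact (Set.univ.pi fun _ : Fin m =>
      Set.univ.pi fun _ : Fin m => Metric.closedBall (0 : ℂ) 1) :=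
    isCompact_univ_pi fun _ => isCompact_univ_pi fun _ => isCompact_closedBall _ _
  have hclosed : IsClosed (Matrix.unitaryGroup (Fin m) ℂ : Set (Matrix (Fin m) (Fin m) ℂ)) := by
    have heq : (Matrix.unitaryGroup (Fin m) ℂ : Set (Matrix (Fin m) (Fin m) ℂ)) =
        (fun H : Matrix (Fin m) (Fin m) ℂ => (star H * H, H * star H)) ⁻¹' {(1, 1)} := by
      ext H
      constructor
      · intro hH
        have h1 : star H * H = 1 := hH.1
        have h2 : H * star H = 1 := hH.2
        simp only [Set.mem_preimage, Set.mem_singleton_iff, Prod.mk.injEq]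
        exact ⟨h1, h2⟩
      · intro hH
        simp only [Set.mem_preimage, Set.mem_singleton_iff, Prod.mk.injEq] at hH
        exact ⟨hH.1, hH.2⟩
    rw [heq]
    exact IsClosed.preimage
      ((continuous_id.matrix_conjTranspose.matrix_mul continuous_id).prodMk
        (continuous_id.matrix_mul continuous_id.matrix_conjTranspose)) isClosed_singleton
  exact isCompact_iff_compactSpace.mp (hcpt.of_isClosed_subset hclosed hsub)

section
open scoped ComplexOrder

lemma det_ne_aux {b q : ℕ} (C : Matrix (Fin b) (Fin q) ℂ) (ρ : ℝ) (hρ : 0 ≤ ρ) :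
    ((1 : Matrix (Fin b) (Fin b) ℂ) + (ρ : ℂ) • (C * Cᴴ)).det ≠ 0 := by
  have hpsd : ((ρ : ℂ) • (C * Cᴴ)).PosSemidef := by
    have heq : (ρ : ℂ) • (C * Cᴴ)
        = (((Real.sqrt ρ : ℝ) : ℂ) • C) * ((((Real.sqrt ρ : ℝ) : ℂ) • C))ᴴ := by
      rw [Matrix.conjTranspose_smul, Matrix.smul_mul, Matrix.mul_smul, smul_smul]
      congr 1
      rw [Complex.star_def, Complex.conj_ofReal, ← Complex.ofReal_mul,
        Real.mul_self_sqrt hρ]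
    rw [heq]
    exact posSemidef_self_mul_conjTranspose _
  exact (Matrix.PosDef.one.add_posSemidef hpsd).det_pos.ne'

end

/-- **Theorem 2 (ergodic capacity for `m_t + m_r > m`).** Under the Haar
probability measure `μ` on the unitary group `U(m)`, the ergodic capacity
`E[log det(I + ρ H₁₁ᴴ H₁₁)]` equals `(m_t+m_r−m)·log(1+ρ)` (that many unfaded
SISO capacities) plus the ergodic capacity `E[log det(I + ρ H₂₂ H₂₂ᴴ)]` of the
residual Jacobi channel with `m−m_r` transmit and `m−m_t` receive modes. -/
theorem ergodic_capacity_of_sum_gt (m mt mr : ℕ) (hmt : mt ≤ m) (hmr : mr ≤ m)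
    (hsum : m ≤ mt + mr) (ρ : ℝ) (hρ : 0 ≤ ρ)
    (μ : Measure (Matrix.unitaryGroup (Fin m) ℂ)) [μ.IsHaarMeasure] [IsProbabilityMeasure μ] :
    (∫ U : Matrix.unitaryGroup (Fin m) ℂ,
        Real.log (Norm.norm
          (1 + (ρ : ℂ) • ((sub11 mt mr hmt hmr (U : Matrix (Fin m) (Fin m) ℂ))ᴴ
            * sub11 mt mr hmt hmr (U : Matrix (Fin m) (Fin m) ℂ))).det) ∂μ)
      = ((mt : ℝ) + mr - m) * Real.log (1 + ρ)
        + ∫ U : Matrix.unitaryGroup (Fin m) ℂ,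
            Real.log (Norm.norm
              (1 + (ρ : ℂ) • (sub22 mt mr (U : Matrix (Fin m) (Fin m) ℂ)
                * (sub22 mt mr (U : Matrix (Fin m) (Fin m) ℂ))ᴴ)).det) ∂μ := by
  have hdet_ne : ∀ U : Matrix.unitaryGroup (Fin m) ℂ,
      Norm.norm (1 + (ρ : ℂ) • (sub22 mt mr (U : Matrix (Fin m) (Fin m) ℂ)
        * (sub22 mt mr (U : Matrix (Fin m) (Fin m) ℂ))ᴴ)).det ≠ 0 := fun U =>
    norm_ne_zero_iff.mpr (det_ne_aux (sub22 mt mr (U : Matrix (Fin m) (Fin m) ℂ)) ρ hρ)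
  have key : ∀ U : Matrix.unitaryGroup (Fin m) ℂ,
      Real.log (Norm.norm
        (1 + (ρ : ℂ) • ((sub11 mt mr hmt hmr (U : Matrix (Fin m) (Fin m) ℂ))ᴴ
          * sub11 mt mr hmt hmr (U : Matrix (Fin m) (Fin m) ℂ))).det)
      = ((mt : ℝ) + mr - m) * Real.log (1 + ρ)
        + Real.log (Norm.norm
            (1 + (ρ : ℂ) • (sub22 mt mr (U : Matrix (Fin m) (Fin m) ℂ)
              * (sub22 mt mr (U : Matrix (Fin m) (Fin m) ℂ))ᴴ)).det) := by
    intro U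
    have hU1 : ((U : Matrix (Fin m) (Fin m) ℂ))ᴴ * (U : Matrix (Fin m) (Fin m) ℂ) = 1 := by
      rw [← Matrix.star_eq_conjTranspose]; exact U.2.1
    have hU2 : (U : Matrix (Fin m) (Fin m) ℂ) * ((U : Matrix (Fin m) (Fin m) ℂ))ᴴ = 1 := by
      rw [← Matrix.star_eq_conjTranspose]; exact U.2.2
    have hA := eq_sub_of_add_eq (blocks_col mt mr hmt hmr _ hU1)
    have hC := eq_sub_of_add_eq (blocks_row mt mr hmt hmr _ hU2)
    have hba : m - mr ≤ mt := by omega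
    have hdet := det_key hba (sub11 mt mr hmt hmr (U : Matrix (Fin m) (Fin m) ℂ))
      (sub21 mt mr hmt hmr (U : Matrix (Fin m) (Fin m) ℂ))
      (sub22 mt mr (U : Matrix (Fin m) (Fin m) ℂ)) hA hC ρ hρ
    rw [hdet, norm_mul]
    have habs : Norm.norm ((1 + (ρ : ℂ)) ^ (mt - (m - mr))) = (1 + ρ) ^ (mt - (m - mr)) := by
      rw [norm_pow]
      congr 1
      rw [show (1 + (ρ : ℂ)) = ((1 + ρ : ℝ) : ℂ) by push_cast; ring, Complex.norm_real, Real.norm_eq_abs,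
        abs_of_nonneg (by linarith)]
    rw [habs, Real.log_mul (by positivity) (hdet_ne U), Real.log_pow]
    have hcast : ((mt - (m - mr) : ℕ) : ℝ) = (mt : ℝ) + mr - m := by
      have h1 : mt - (m - mr) = mt + mr - m := by omega
      rw [h1, Nat.cast_sub hsum]
      push_cast
      ring
    rw [hcast]
  have hcoe : Continuous (fun U : Matrix.unitaryGroup (Fin m) ℂ =>
      (U : Matrix (Fin m) (Fin m) ℂ)) := continuous_subtype_val
  have hsub22 : Continuous (fun U : Matrix.unitaryGroup (Fin m) ℂ =>
      sub22 mt mr (U : Matrix (Fin m) (Fin m) ℂ)) := by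
    apply continuous_matrix
    intro i j
    simp only [sub22, Matrix.of_apply]
    exact (continuous_apply _).comp ((continuous_apply _).comp hcoe)
  have habs_cont : Continuous (fun U : Matrix.unitaryGroup (Fin m) ℂ =>
      Norm.norm (1 + (ρ : ℂ) • (sub22 mt mr (U : Matrix (Fin m) (Fin m) ℂ)
        * (sub22 mt mr (U : Matrix (Fin m) (Fin m) ℂ))ᴴ)).det) :=
    continuous_norm.comp
      (((continuous_const (y := (1 : Matrix (Fin (m - mr)) (Fin (m - mr)) ℂ))).add ((continuous_const (y := (ρ : ℂ))).smul
        (hsub22.matrix_mul hsub22.matrix_conjTranspose))).matrix_det)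
  have hcont : Continuous (fun U : Matrix.unitaryGroup (Fin m) ℂ =>
      Real.log (Norm.norm (1 + (ρ : ℂ) • (sub22 mt mr (U : Matrix (Fin m) (Fin m) ℂ)
        * (sub22 mt mr (U : Matrix (Fin m) (Fin m) ℂ))ᴴ)).det)) :=
    Real.continuousOn_log.comp_continuous habs_cont (fun U => hdet_ne U)
  have hInt : Integrable (fun U : Matrix.unitaryGroup (Fin m) ℂ =>
      Real.log (Norm.norm (1 + (ρ : ℂ) • (sub22 mt mr (U : Matrix (Fin m) (Fin m) ℂ)
        * (sub22 mt mr (U : Matrix (Fin m) (Fin m) ℂ))ᴴ)).det)) μ :=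
    integrableOn_univ.mp
      (hcont.continuousOn.integrableOn_compact' isCompact_univ MeasurableSet.univ)
  rw [integral_congr_ae (Filter.Eventually.of_forall key),
    integral_add (integrable_const _) hInt, integral_const, probReal_univ]
  simp
end
end

section
/- (Marginal eigenvalue density of the Jacobi ensemble, Appendix A.) Let n ≥ 1 be a natural number and α, β nonnegative integers, and define the weight w(λ₁,…,λₙ) = ∏_{i=1}^n λ_i^α (1−λ_i)^β · ∏_{1≤i<j≤n} (λ_i − λ_j)² on [0,1]^n, with normalization Z = ∫_{[0,1]^n} w(λ₁,…,λₙ) dλ₁⋯dλₙ. Then for every x ∈ [0,1], ∫_{[0,1]^{n−1}} w(x, λ₂,…,λₙ) dλ₂⋯dλₙ = (Z/n) · ∑_{k=0}^{n−1} b_{k,α,β}^{−1} · [P_k^{(α,β)}(1−2x)]² · x^α (1−x)^β; that is, the marginal density of one unordered eigenvalue of the Jacobi ensemble equals (1/n)·∑_{k=0}^{n−1} b_{k,α,β}^{−1} [P_k^{(α,β)}(1−2x)]² x^α(1−x)^β. -/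
open MeasureTheory

noncomputable section

/-- The Jacobi polynomial `P_k^{(α,β)}`, given by the Rodrigues formula
`P_k^{(α,β)}(x) = ((−1)^k/(2^k k!)) (1−x)^{−α} (1+x)^{−β}
  (d/dx)^k [(1−x)^{k+α} (1+x)^{k+β}]`. -/
def jacobiP (α β k : ℕ) (x : ℝ) : ℝ :=
  ((-1 : ℝ) ^ k / (2 ^ k * (Nat.factorial k))) * (1 - x) ^ (-(α : ℤ)) * (1 + x) ^ (-(β : ℤ))
    * iteratedDeriv k (fun y : ℝ => (1 - y) ^ (k + α) * (1 + y) ^ (k + β)) x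

/-- The normalization constant
`b_{k,α,β} = (1/(2k+α+β+1)) C(2k+α+β, k) C(2k+α+β, k+α)⁻¹`. -/
def bCoef (k α β : ℕ) : ℝ :=
  (1 / (2 * k + α + β + 1)) * ((2 * k + α + β).choose k)
    * (((2 * k + α + β).choose (k + α) : ℝ))⁻¹

/-- The (unnormalized) joint eigenvalue weight of the Jacobi ensemble:
`w(λ₁,…,λₙ) = ∏ᵢ λᵢ^α (1−λᵢ)^β · ∏_{i<j} (λᵢ − λⱼ)²`. -/
def jacobiWeight (n α β : ℕ) (l : Fin n → ℝ) : ℝ :=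
  (∏ i, l i ^ α * (1 - l i) ^ β) * ∏ i, ∏ j ∈ Finset.Ioi i, (l i - l j) ^ 2

open Polynomial Finset

namespace JacobiAux


/-- Rodrigues numerator on `[0,1]`. -/
def Rk (α β k : ℕ) : ℝ[X] := X ^ (k + α) * (1 - X) ^ (k + β)

/-- The (unnormalized) shifted Jacobi polynomial. -/
def Hk (α β k : ℕ) : ℝ[X] := ∑ i ∈ range (k+1),
  C ((k.choose i : ℝ) * ((k+α).descFactorial (k-i)) * ((-1:ℝ)^i * ((k+β).descFactorial i)))
    * (X ^ i * (1 - X) ^ (k - i))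

lemma one_sub_X_eq : ((1:ℝ[X]) - X) = C (-1) * (X - C 1) := by
  simp only [map_neg, map_one]; ring

lemma iterate_derivative_one_sub_pow (n m : ℕ) (h : m ≤ n) :
    derivative^[m] ((1 - X : ℝ[X]) ^ n)
      = C ((-1:ℝ)^m * n.descFactorial m) * (1 - X) ^ (n - m) := by
  have h1 : ((1:ℝ[X]) - X) ^ n = C ((-1:ℝ) ^ n) * (X - C 1) ^ n := by
    rw [one_sub_X_eq, mul_pow, ← C_pow]
  have h2 : (X - C (1:ℝ)) ^ (n - m) = C ((-1:ℝ) ^ (n-m)) * (1 - X) ^ (n-m) := by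
    rw [one_sub_X_eq, mul_pow, ← C_pow, ← mul_assoc, ← C_mul, ← mul_pow]
    norm_num
  rw [h1, iterate_derivative_C_mul, iterate_derivative_X_sub_pow, h2]
  have hsgn : (-1:ℝ) ^ n = (-1:ℝ) ^ (n - m) * (-1) ^ m := by
    rw [← pow_add]; congr 1; omega
  rw [nsmul_eq_mul]
  have h4 : (n.descFactorial m : ℝ[X]) = C (n.descFactorial m : ℝ) := by
    simp
  rw [h4, hsgn]
  simp only [← C_mul, ← C_pow, ← mul_assoc]
  congr 2
  have : (-1:ℝ) ^ (n - m) * (-1) ^ (n - m) = 1 := by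
    rw [← pow_add, ← two_mul, pow_mul]; norm_num
  calc (-1:ℝ) ^ (n - m) * (-1) ^ m * ↑(n.descFactorial m) * (-1) ^ (n - m)
      = ((-1:ℝ) ^ (n - m) * (-1) ^ (n - m)) * ((-1) ^ m * ↑(n.descFactorial m)) := by ring
    _ = (-1) ^ m * ↑(n.descFactorial m) := by rw [this, one_mul]

lemma iterate_derivative_Rk (α β k m : ℕ) (hm : m ≤ k) :
    derivative^[m] (Rk α β k) = ∑ i ∈ range (m+1),
      C ((m.choose i : ℝ) * ((k+α).descFactorial (m-i)) * ((-1:ℝ)^i * ((k+β).descFactorial i)))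
        * (X ^ (k + α - (m - i)) * (1 - X) ^ (k + β - i)) := by
  rw [Rk, iterate_derivative_mul]
  refine Finset.sum_congr rfl fun i hi => ?_
  have hik : i ≤ k + β := by
    have := Finset.mem_range.mp hi; omega
  rw [iterate_derivative_X_pow_eq_C_mul, iterate_derivative_one_sub_pow _ _ hik, nsmul_eq_mul]
  simp only [C_mul, C_pow, C_neg, C_1, C_eq_natCast]
  ring

lemma eval_zero_iterate_derivative_Rk (α β k m : ℕ) (hm : m < k) :
    eval 0 (derivative^[m] (Rk α β k)) = 0 := by
  rw [iterate_derivative_Rk α β k m hm.le]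
  rw [eval_finset_sum]
  refine Finset.sum_eq_zero fun i hi => ?_
  have hi' := Finset.mem_range.mp hi
  have : k + α - (m - i) ≠ 0 := by omega
  simp [this]

lemma eval_one_iterate_derivative_Rk (α β k m : ℕ) (hm : m < k) :
    eval 1 (derivative^[m] (Rk α β k)) = 0 := by
  rw [iterate_derivative_Rk α β k m hm.le]
  rw [eval_finset_sum]
  refine Finset.sum_eq_zero fun i hi => ?_
  have hi' := Finset.mem_range.mp hi
  have : k + β - i ≠ 0 := by omega
  simp [this]

lemma iterate_derivative_Rk_self (α β k : ℕ) :
    derivative^[k] (Rk α β k) = X ^ α * (1 - X) ^ β * Hk α β k := by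
  rw [iterate_derivative_Rk α β k k le_rfl, Hk, Finset.mul_sum]
  refine Finset.sum_congr rfl fun i hi => ?_
  have hi' := Finset.mem_range.mp hi
  have h1 : k + α - (k - i) = α + i := by omega
  have h2 : k + β - i = β + (k - i) := by omega
  rw [h1, h2, pow_add, pow_add]
  ring

lemma natDegree_one_sub_X : ((1:ℝ[X]) - X).natDegree = 1 := by
  have h : ((1:ℝ[X]) - X) = -(X - C 1) := by rw [C_1]; ring
  rw [h, natDegree_neg, natDegree_X_sub_C]

lemma natDegree_Hk_le (α β k : ℕ) : (Hk α β k).natDegree ≤ k := by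
  refine Polynomial.natDegree_sum_le_of_forall_le _ _ fun i hi => ?_
  have hi' := Finset.mem_range.mp hi
  refine (natDegree_mul_le).trans ?_
  have h1 : (C ((k.choose i : ℝ) * ((k+α).descFactorial (k-i)) *
      ((-1:ℝ)^i * ((k+β).descFactorial i)))).natDegree = 0 := natDegree_C _
  have h2 : (X ^ i * ((1:ℝ[X]) - X) ^ (k - i)).natDegree ≤ k := by
    refine (natDegree_mul_le).trans ?_
    have := natDegree_pow_le (p := (1:ℝ[X]) - X) (n := k - i)
    rw [natDegree_one_sub_X] at this
    have hx : (X ^ i : ℝ[X]).natDegree ≤ i := natDegree_X_pow_le i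
    omega
  omega

lemma coeff_one_sub_pow_self (m : ℕ) : (((1:ℝ[X]) - X) ^ m).coeff m = (-1:ℝ)^m := by
  have h1 : ((1:ℝ[X]) - X) ^ m = C ((-1:ℝ)^m) * (X - C 1) ^ m := by
    rw [one_sub_X_eq, mul_pow, ← C_pow]
  have h2 : ((X - C (1:ℝ)) ^ m).coeff m = 1 := by
    have hm : ((X - C (1:ℝ)) ^ m).natDegree = m := by
      rw [natDegree_pow, natDegree_X_sub_C, mul_one]
    have := ((monic_X_sub_C (1:ℝ)).pow m).coeff_natDegree
    rwa [hm] at this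
  rw [h1, coeff_C_mul, h2, mul_one]

lemma nat_sum_identity (α β k : ℕ) :
    ∑ i ∈ range (k+1), k.choose i * ((k+α).descFactorial (k-i)) * ((k+β).descFactorial i)
      = k.factorial * (2*k+α+β).choose k := by
  have h : ∀ i ∈ range (k+1),
      k.choose i * ((k+α).descFactorial (k-i)) * ((k+β).descFactorial i)
        = k.factorial * ((k+α).choose (k-i) * (k+β).choose i) := by
    intro i hi
    have hi' := Finset.mem_range.mp hi
    rw [Nat.descFactorial_eq_factorial_mul_choose, Nat.descFactorial_eq_factorial_mul_choose]
    have : k.choose i * (k - i).factorial * i.factorial = k.factorial := by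
      have := Nat.choose_mul_factorial_mul_factorial (Nat.le_of_lt_succ hi')
      rw [← this]; ring
    calc k.choose i * ((k-i).factorial * (k+α).choose (k-i)) * (i.factorial * (k+β).choose i)
        = (k.choose i * (k - i).factorial * i.factorial) *
            ((k+α).choose (k-i) * (k+β).choose i) := by ring
      _ = _ := by rw [this]
  rw [Finset.sum_congr rfl h, ← Finset.mul_sum]
  congr 1
  have hrefl : ∑ i ∈ range (k+1), (k+α).choose (k-i) * (k+β).choose i
      = ∑ i ∈ range (k+1), (k+α).choose i * (k+β).choose (k-i) := by
    rw [← Finset.sum_range_reflect]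
    refine Finset.sum_congr rfl fun i hi => ?_
    have hi' := Finset.mem_range.mp hi
    have e1 : k + 1 - 1 - i = k - i := by omega
    have e2 : k - (k - i) = i := by omega
    rw [e1, e2]
  rw [hrefl]
  have hv := Nat.add_choose_eq (k+α) (k+β) k
  have h2 : 2*k+α+β = (k+α) + (k+β) := by omega
  rw [h2, hv, Finset.Nat.sum_antidiagonal_eq_sum_range_succ_mk]

lemma coeff_Hk_self (α β k : ℕ) :
    (Hk α β k).coeff k = (-1:ℝ)^k * (k.factorial * (2*k+α+β).choose k) := by
  rw [Hk, finset_sum_coeff]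
  have h : ∀ i ∈ range (k+1),
      (C ((k.choose i : ℝ) * ((k+α).descFactorial (k-i)) * ((-1:ℝ)^i * ((k+β).descFactorial i)))
        * (X ^ i * (1 - X) ^ (k - i))).coeff k
      = (-1:ℝ)^k * (k.choose i * ((k+α).descFactorial (k-i)) * ((k+β).descFactorial i)) := by
    intro i hi
    have hi' := Finset.mem_range.mp hi
    rw [coeff_C_mul]
    have hc := coeff_X_pow_mul (((1:ℝ[X]) - X) ^ (k - i)) i (k - i)
    rw [show k - i + i = k by omega] at hc
    rw [hc, coeff_one_sub_pow_self]
    have hs : (-1:ℝ)^k = (-1:ℝ)^i * (-1:ℝ)^(k-i) := by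
      rw [← pow_add]; congr 1; omega
    rw [hs]; ring
  rw [Finset.sum_congr rfl h, ← Finset.mul_sum]
  congr 1
  have := congrArg (fun n : ℕ => (n : ℝ)) (nat_sum_identity α β k)
  push_cast at this ⊢
  linarith [this]

end JacobiAux

namespace JacobiAux

def phi (α β k : ℕ) : ℝ[X] := C ((k.factorial : ℝ))⁻¹ * Hk α β k

lemma natDegree_phi_le (α β k : ℕ) : (phi α β k).natDegree ≤ k := by
  refine natDegree_mul_le.trans ?_
  have := natDegree_Hk_le α β k
  simp only [natDegree_C]
  omega

lemma coeff_phi_self (α β k : ℕ) :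
    (phi α β k).coeff k = (-1:ℝ)^k * ((2*k+α+β).choose k) := by
  rw [phi, coeff_C_mul, coeff_Hk_self]
  have hf : (k.factorial : ℝ) ≠ 0 := by exact_mod_cast k.factorial_ne_zero
  field_simp

lemma integral_deriv_poly (p : ℝ[X]) :
    ∫ t in (0:ℝ)..1, (derivative p).eval t = p.eval 1 - p.eval 0 := by
  refine intervalIntegral.integral_eq_sub_of_hasDerivAt (fun x _ => p.hasDerivAt x) ?_
  exact ((derivative p).continuous_aeval).intervalIntegrable _ _

lemma poly_intervalIntegrable (p : ℝ[X]) (f : ℝ → ℝ) (hf : Continuous f) :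
    IntervalIntegrable (fun t => f t) MeasureTheory.volume (0:ℝ) 1 :=
  hf.intervalIntegrable _ _

lemma parts (p q : ℝ[X]) (h0 : p.eval 0 = 0) (h1 : p.eval 1 = 0) :
    ∫ t in (0:ℝ)..1, (derivative p).eval t * q.eval t
      = - ∫ t in (0:ℝ)..1, p.eval t * (derivative q).eval t := by
  have h := intervalIntegral.integral_mul_deriv_eq_deriv_mul
    (u := fun t => q.eval t) (u' := fun t => (derivative q).eval t)
    (v := fun t => p.eval t) (v' := fun t => (derivative p).eval t)
    (a := (0:ℝ)) (b := 1)
    (fun x _ => q.hasDerivAt x) (fun x _ => p.hasDerivAt x)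
    (((derivative q).continuous_aeval).intervalIntegrable _ _)
    (((derivative p).continuous_aeval).intervalIntegrable _ _)
  beta_reduce at h
  rw [h0, h1, mul_zero, mul_zero, sub_zero, zero_sub] at h
  calc ∫ t in (0:ℝ)..1, (derivative p).eval t * q.eval t
      = ∫ t in (0:ℝ)..1, q.eval t * (derivative p).eval t := by
        simp_rw [mul_comm]
    _ = - ∫ t in (0:ℝ)..1, (derivative q).eval t * p.eval t := h
    _ = - ∫ t in (0:ℝ)..1, p.eval t * (derivative q).eval t := by
        simp_rw [mul_comm]

lemma iterated_parts (α β k : ℕ) (q : ℝ[X]) : ∀ j, j ≤ k →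
    ∫ t in (0:ℝ)..1, (derivative^[k] (Rk α β k)).eval t * q.eval t
      = (-1:ℝ)^j * ∫ t in (0:ℝ)..1,
          (derivative^[k-j] (Rk α β k)).eval t * (derivative^[j] q).eval t := by
  intro j
  induction j with
  | zero => intro _; simp
  | succ j ih =>
    intro hj
    rw [ih (by omega)]
    have hd : derivative^[k-j] (Rk α β k) = derivative (derivative^[k-(j+1)] (Rk α β k)) := by
      conv_lhs => rw [show k - j = (k-(j+1)) + 1 by omega]
      rw [Function.iterate_succ_apply']
    rw [hd, parts _ _ (eval_zero_iterate_derivative_Rk α β k _ (by omega))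
      (eval_one_iterate_derivative_Rk α β k _ (by omega))]
    rw [← Function.iterate_succ_apply' derivative j q]
    ring

lemma key_orth (α β k : ℕ) (q : ℝ[X]) :
    ∫ t in (0:ℝ)..1, (derivative^[k] (Rk α β k)).eval t * q.eval t
      = (-1:ℝ)^k * ∫ t in (0:ℝ)..1, (Rk α β k).eval t * (derivative^[k] q).eval t := by
  have := iterated_parts α β k q k le_rfl
  rwa [Nat.sub_self, Function.iterate_zero_apply] at this

lemma beta_nat (b a : ℕ) : ∫ t in (0:ℝ)..1, t^a * (1-t)^b
    = (a.factorial * b.factorial : ℝ) / (a+b+1).factorial := by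
  induction b generalizing a with
  | zero =>
    simp only [pow_zero, mul_one, Nat.factorial_zero, Nat.cast_one, Nat.add_zero]
    rw [integral_pow]
    rw [Nat.factorial_succ]
    have : ((a+1).factorial : ℝ) ≠ 0 := by exact_mod_cast (a+1).factorial_ne_zero
    have h2 : (a.factorial : ℝ) ≠ 0 := by exact_mod_cast a.factorial_ne_zero
    push_cast [Nat.factorial_succ]
    field_simp
    simp
  | succ b ih =>
    have hder : derivative ((X:ℝ[X])^(a+1) * (1-X)^(b+1))
        = C ((a:ℝ)+1) * (X^a * (1-X)^(b+1)) - C ((b:ℝ)+1) * (X^(a+1) * (1-X)^b) := by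
      rw [derivative_mul, derivative_X_pow, derivative_pow, derivative_sub, derivative_one,
        derivative_X]
      simp only [C_add, C_1, C_eq_natCast]
      push_cast
      ring
    have hint := integral_deriv_poly ((X:ℝ[X])^(a+1) * (1-X)^(b+1))
    rw [hder] at hint
    simp only [eval_sub, eval_mul, eval_C, eval_pow, eval_X, eval_sub, eval_one] at hint
    have h1 : IntervalIntegrable (fun t : ℝ => ((a:ℝ)+1) * (t^a * (1-t)^(b+1)))
        MeasureTheory.volume (0:ℝ) 1 := by
      apply Continuous.intervalIntegrable; continuity
    have h2 : IntervalIntegrable (fun t : ℝ => ((b:ℝ)+1) * (t^(a+1) * (1-t)^b))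
        MeasureTheory.volume (0:ℝ) 1 := by
      apply Continuous.intervalIntegrable; continuity
    rw [intervalIntegral.integral_sub h1 h2, intervalIntegral.integral_const_mul,
      intervalIntegral.integral_const_mul] at hint
    norm_num at hint
    have hz : ((a:ℝ)+1) * (∫ t in (0:ℝ)..1, t^a * (1-t)^(b+1))
        = ((b:ℝ)+1) * (∫ t in (0:ℝ)..1, t^(a+1) * (1-t)^b) := by
      linarith [hint]
    rw [ih (a+1)] at hz
    have ha : ((a:ℝ)+1) ≠ 0 := by positivity
    have hfac : ((a+1+b+1).factorial : ℝ) ≠ 0 := by exact_mod_cast (a+1+b+1).factorial_ne_zero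
    have goalfac : ((a+(b+1)+1).factorial : ℝ) ≠ 0 := by
      exact_mod_cast (a+(b+1)+1).factorial_ne_zero
    have key : (∫ t in (0:ℝ)..1, t^a * (1-t)^(b+1))
        = ((b:ℝ)+1) * ((a+1).factorial * b.factorial / (a+1+b+1).factorial) / ((a:ℝ)+1) := by
      rw [eq_div_iff ha]
      linear_combination hz
    rw [key]
    have e1 : a+(b+1)+1 = a+1+b+1 := by omega
    rw [e1]
    have e2 : ((a+1).factorial : ℝ) = ((a:ℝ)+1) * a.factorial := by
      push_cast [Nat.factorial_succ]; ring
    have e3 : ((b+1).factorial : ℝ) = ((b:ℝ)+1) * b.factorial := by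
      push_cast [Nat.factorial_succ]; ring
    rw [e2, e3]
    field_simp

end JacobiAux

namespace JacobiAux

lemma bCoef_eq (k α β : ℕ) : bCoef k α β
    = ((2*k+α+β).choose k : ℝ) * (((k+α).factorial : ℝ) * ((k+β).factorial))
        / ((2*k+α+β+1).factorial : ℝ) := by
  have hm : k + α ≤ 2*k+α+β := by omega
  have hc := Nat.choose_mul_factorial_mul_factorial hm
  rw [show 2*k+α+β - (k+α) = k+β by omega] at hc
  have hc' : ((2*k+α+β).choose (k+α) : ℝ) * (k+α).factorial * (k+β).factorial
      = (2*k+α+β).factorial := by exact_mod_cast congrArg (fun n : ℕ => (n:ℝ)) hc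
  have hch : ((2*k+α+β).choose (k+α) : ℝ) ≠ 0 := by
    have := Nat.choose_pos hm
    positivity
  have hfac1 : ((2*k+α+β+1).factorial : ℝ) = (2*(k:ℝ)+α+β+1) * (2*k+α+β).factorial := by
    rw [Nat.factorial_succ]; push_cast; ring
  have hden : (2*(k:ℝ)+↑α+↑β+1) ≠ 0 := by positivity
  have hfac2 : ((2*k+α+β).factorial : ℝ) ≠ 0 := by
    exact_mod_cast (2*k+α+β).factorial_ne_zero
  have hprod : ((k+α).factorial : ℝ) * ((k+β).factorial)
      = ((2*k+α+β).factorial : ℝ) / ((2*k+α+β).choose (k+α)) := by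
    field_simp
    linear_combination hc'
  rw [bCoef, hfac1, hprod]
  field_simp

lemma bCoef_pos (k α β : ℕ) : 0 < bCoef k α β := by
  rw [bCoef_eq]
  have h1 := Nat.choose_pos (show k ≤ 2*k+α+β by omega)
  have h2 := (k+α).factorial_pos
  have h3 := (k+β).factorial_pos
  have h4 := (2*k+α+β+1).factorial_pos
  positivity

lemma bCoef_ne_zero (k α β : ℕ) : bCoef k α β ≠ 0 := (bCoef_pos k α β).ne'

lemma orth_le (α β j k : ℕ) (hjk : j ≤ k) :
    ∫ t in (0:ℝ)..1, (phi α β j).eval t * (phi α β k).eval t * (t^α * (1-t)^β)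
      = if j = k then bCoef k α β else 0 := by
  have h1 : ∀ t : ℝ, (phi α β j).eval t * (phi α β k).eval t * (t^α*(1-t)^β)
      = (k.factorial:ℝ)⁻¹ * ((derivative^[k] (Rk α β k)).eval t * (phi α β j).eval t) := by
    intro t
    rw [iterate_derivative_Rk_self]
    simp only [phi, eval_mul, eval_C, eval_pow, eval_X, eval_sub, eval_one]
    ring
  simp_rw [h1]
  rw [intervalIntegral.integral_const_mul, key_orth]
  by_cases h : j = k
  · subst h
    have hD : derivative^[j] (phi α β j)
        = C ((j.factorial : ℝ) * ((-1:ℝ)^j * ((2*j+α+β).choose j))) := by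
      have hd1 := Polynomial.natDegree_iterate_derivative (phi α β j) j
      have hd2 := natDegree_phi_le α β j
      have hdeg : (derivative^[j] (phi α β j)).natDegree ≤ 0 := by omega
      have hC := Polynomial.eq_C_of_natDegree_le_zero hdeg
      rw [hC, Polynomial.coeff_iterate_derivative, zero_add, Nat.descFactorial_self,
        coeff_phi_self, nsmul_eq_mul]
    rw [hD]
    have h2 : ∀ t : ℝ, (Rk α β j).eval t
        * (C ((j.factorial : ℝ) * ((-1:ℝ)^j * ((2*j+α+β).choose j)))).eval t
        = ((j.factorial : ℝ) * ((-1:ℝ)^j * ((2*j+α+β).choose j))) * (t^(j+α) * (1-t)^(j+β)) := by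
      intro t
      simp only [Rk, eval_mul, eval_C, eval_pow, eval_X, eval_sub, eval_one]
      ring
    simp_rw [h2]
    rw [intervalIntegral.integral_const_mul, beta_nat]
    simp only [if_true]
    rw [bCoef_eq]
    rw [show j+α+(j+β)+1 = 2*j+α+β+1 by omega]
    have hfacne : (j.factorial : ℝ) ≠ 0 := by exact_mod_cast j.factorial_ne_zero
    have hs2 : (-1:ℝ)^(j*2) = 1 := by rw [mul_comm j 2, pow_mul]; norm_num
    have hfacne2 : ((2*j+α+β+1).factorial : ℝ) ≠ 0 := by
      exact_mod_cast (2*j+α+β+1).factorial_ne_zero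
    field_simp
    linear_combination ((2*j+α+β).choose j : ℝ) * hs2
  · have hlt : j < k := lt_of_le_of_ne hjk h
    rw [Polynomial.iterate_derivative_eq_zero (lt_of_le_of_lt (natDegree_phi_le α β j) hlt)]
    simp [h]

lemma orth (α β j k : ℕ) :
    ∫ t in (0:ℝ)..1, (phi α β j).eval t * (phi α β k).eval t * (t^α * (1-t)^β)
      = if j = k then bCoef j α β else 0 := by
  rcases le_total j k with hjk | hkj
  · rw [orth_le α β j k hjk]
    by_cases h : j = k
    · subst h; simp
    · simp [h]
  · have := orth_le α β k j hkj
    have hcomm : ∀ t : ℝ, (phi α β j).eval t * (phi α β k).eval t * (t^α * (1-t)^β)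
        = (phi α β k).eval t * (phi α β j).eval t * (t^α * (1-t)^β) := by intro t; ring
    simp_rw [hcomm]
    rw [this]
    by_cases h : j = k
    · subst h; simp
    · simp [h, Ne.symm h]

end JacobiAux

namespace JacobiAux

lemma iteratedDeriv_polyeval (p : ℝ[X]) (n : ℕ) :
    iteratedDeriv n (fun x => p.eval x) = fun x => (derivative^[n] p).eval x := by
  induction n with
  | zero => simp
  | succ n ih =>
    rw [iteratedDeriv_succ, ih]
    funext x
    rw [Function.iterate_succ_apply' derivative n p]
    exact Polynomial.deriv _

lemma iterate_derivative_comp_linear (p : ℝ[X]) (a b : ℝ) (n : ℕ) :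
    derivative^[n] (p.comp (C a + C b * X))
      = C (b^n) * (derivative^[n] p).comp (C a + C b * X) := by
  induction n with
  | zero => simp
  | succ n ih =>
    rw [Function.iterate_succ_apply', ih, derivative_C_mul, derivative_comp]
    have hq : derivative (C a + C b * X) = C b := by
      simp
    rw [hq, Function.iterate_succ_apply' derivative n p]
    rw [pow_succ]
    simp only [C_mul]
    ring

def Pk (α β k : ℕ) : ℝ[X] := (1 - X)^(k+α) * (1+X)^(k+β)

lemma Pk_comp (α β k : ℕ) :
    (Pk α β k).comp (C 1 + C (-2) * X) = C ((2:ℝ)^(2*k+α+β)) * Rk α β k := by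
  rw [Pk, mul_comp, pow_comp, pow_comp, sub_comp, add_comp, one_comp, X_comp]
  have h1 : (1 : ℝ[X]) - (C 1 + C (-2) * X) = C 2 * X := by
    simp only [map_neg, map_one, map_ofNat]
    ring
  have h2 : (1 : ℝ[X]) + (C 1 + C (-2) * X) = C 2 * (1 - X) := by
    simp only [map_neg, map_one, map_ofNat]
    ring
  rw [h1, h2, mul_pow, mul_pow, ← C_pow, ← C_pow, Rk]
  have h3 : (2:ℝ)^(k+α) * 2^(k+β) = 2^(2*k+α+β) := by
    rw [← pow_add]; congr 1; omega
  rw [← h3, C_mul]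
  ring

lemma key_eval (α β k : ℕ) (x : ℝ) :
    ((-2:ℝ))^k * (derivative^[k] (Pk α β k)).eval (1 - 2*x)
      = (2:ℝ)^(2*k+α+β) * (x^α * (1-x)^β * (Hk α β k).eval x) := by
  have hpoly : C ((-2:ℝ)^k) * (derivative^[k] (Pk α β k)).comp (C 1 + C (-2) * X)
      = C ((2:ℝ)^(2*k+α+β)) * derivative^[k] (Rk α β k) := by
    rw [← iterate_derivative_comp_linear, Pk_comp, iterate_derivative_C_mul]
  have := congrArg (fun p : ℝ[X] => p.eval x) hpoly
  simp only [eval_mul, eval_C, eval_comp, eval_add, eval_one, eval_X] at this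
  rw [iterate_derivative_Rk_self] at this
  simp only [eval_mul, eval_pow, eval_X, eval_sub, eval_one] at this
  rw [show (1:ℝ) + -2*x = 1 - 2*x by ring] at this
  linear_combination this

lemma jacobiP_eq_phi (α β k : ℕ) (x : ℝ) (hα : x ≠ 0 ∨ α = 0) (hβ : x ≠ 1 ∨ β = 0) :
    jacobiP α β k (1 - 2*x) = (phi α β k).eval x := by
  have hF : (fun y : ℝ => (1-y)^(k+α) * (1+y)^(k+β)) = fun y => (Pk α β k).eval y := by
    funext y
    simp [Pk]
  rw [jacobiP, hF, iteratedDeriv_polyeval]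
  have e1 : (1 : ℝ) - (1 - 2*x) = 2*x := by ring
  have e2 : (1 : ℝ) + (1 - 2*x) = 2-2*x := by ring
  rw [e1, e2]
  have hz1 : (2*x : ℝ) ^ (-(α:ℤ)) = ((2*x)^α)⁻¹ := by
    rw [zpow_neg, zpow_natCast]
  have hz2 : (2-2*x : ℝ) ^ (-(β:ℤ)) = ((2-2*x)^β)⁻¹ := by
    rw [zpow_neg, zpow_natCast]
  rw [hz1, hz2]
  have hxα : ((2*x)^α : ℝ) ≠ 0 := by
    rcases hα with h | h
    · exact pow_ne_zero _ (by simpa using h)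
    · simp [h]
  have hxβ : ((2-2*x)^β : ℝ) ≠ 0 := by
    rcases hβ with h | h
    · apply pow_ne_zero
      intro hc
      apply h
      linarith
    · simp [h]
  have key := key_eval α β k x
  have hfacne : (k.factorial : ℝ) ≠ 0 := by exact_mod_cast k.factorial_ne_zero
  have h2k : ((2:ℝ)^k) ≠ 0 := by positivity
  have hs : (-1:ℝ)^k * (-1:ℝ)^k = 1 := by rw [← mul_pow]; norm_num
  have hneg2 : ((-2:ℝ))^k = (-1)^k * 2^k := by
    rw [← mul_pow]
    norm_num
  rw [hneg2] at key
  -- key : (-1)^k * 2^k * D = 2^(2k+α+β) * (x^α (1-x)^β H)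
  have hpow1 : ((2*x : ℝ))^α = 2^α * x^α := mul_pow 2 x α
  have hpow2 : ((2-2*x : ℝ))^β = 2^β * (1-x)^β := by
    rw [show (2-2*x : ℝ) = 2*(1-x) by ring, mul_pow]
  rw [hpow1, hpow2]
  rw [phi]
  simp only [eval_mul, eval_C]
  have hxane : (x^α : ℝ) ≠ 0 := by
    rw [hpow1] at hxα
    intro hc; apply hxα; rw [hc]; ring
  have hxbne : ((1-x)^β : ℝ) ≠ 0 := by
    rw [hpow2] at hxβ
    intro hc; apply hxβ; rw [hc]; ring
  have h2a : ((2:ℝ)^α) ≠ 0 := by positivity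
  have h2b : ((2:ℝ)^β) ≠ 0 := by positivity
  have hpw : (2:ℝ)^(2*k+α+β) = 2^k * (2^k * 2^α * 2^β) := by
    rw [← pow_add, ← pow_add, ← pow_add]; congr 1; omega
  rw [hpw] at key
  rcases Nat.even_or_odd k with hk | hk
  · have hv : (-1:ℝ)^k = 1 := hk.neg_one_pow
    rw [hv, one_mul] at key
    have hD : (derivative^[k] (Pk α β k)).eval (1 - 2*x)
        = 2^k * 2^α * 2^β * (x^α * (1-x)^β * (Hk α β k).eval x) := by
      apply mul_left_cancel₀ h2k
      linear_combination key
    rw [hv, hD]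
    field_simp
  · have hv : (-1:ℝ)^k = -1 := hk.neg_one_pow
    rw [hv] at key
    have hD : (derivative^[k] (Pk α β k)).eval (1 - 2*x)
        = -(2^k * 2^α * 2^β * (x^α * (1-x)^β * (Hk α β k).eval x)) := by
      apply mul_left_cancel₀ h2k
      linear_combination -key
    rw [hv, hD]
    field_simp

end JacobiAux

namespace JacobiAux

/-- endpoint-safe version -/
lemma jacobiP_sq (α β k : ℕ) (x : ℝ) (hx : x ∈ Set.Icc (0:ℝ) 1) :
    (jacobiP α β k (1 - 2*x))^2 * x^α * (1-x)^β
      = (phi α β k).eval x * (phi α β k).eval x * (x^α * (1-x)^β) := by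
  by_cases h0 : x = 0 ∧ α ≠ 0
  · obtain ⟨rfl, ha⟩ := h0
    simp [zero_pow ha]
  by_cases h1 : x = 1 ∧ β ≠ 0
  · obtain ⟨rfl, hb⟩ := h1
    simp [zero_pow hb]
  push_neg at h0 h1
  have hα : x ≠ 0 ∨ α = 0 := by
    by_cases hx0 : x = 0
    · exact Or.inr (h0 hx0)
    · exact Or.inl hx0
  have hβ : x ≠ 1 ∨ β = 0 := by
    by_cases hx1 : x = 1
    · exact Or.inr (h1 hx1)
    · exact Or.inl hx1
  rw [jacobiP_eq_phi α β k x hα hβ]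
  ring

def cC (α β i : ℕ) : ℝ := (-1:ℝ)^i * ((2*i+α+β).choose i)

lemma cC_ne_zero (α β i : ℕ) : cC α β i ≠ 0 := by
  have h := Nat.choose_pos (show i ≤ 2*i+α+β by omega)
  have h1 : ((2*i+α+β).choose i : ℝ) ≠ 0 := by positivity
  simp only [cC]
  intro hc
  rcases mul_eq_zero.mp hc with h2 | h2
  · exact (pow_ne_zero i (by norm_num : (-1:ℝ) ≠ 0)) h2
  · exact h1 h2

lemma coeff_phi_cC (α β i : ℕ) : (phi α β i).coeff i = cC α β i := coeff_phi_self α β i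

open Matrix in
lemma det_phi_matrix {n : ℕ} (α β : ℕ) (l : Fin n → ℝ) :
    Matrix.det (Matrix.of fun i j : Fin n => (phi α β (i:ℕ)).eval (l j))
      = (∏ i : Fin n, cC α β (i:ℕ)) * Matrix.det (Matrix.vandermonde l) := by
  set A : Matrix (Fin n) (Fin n) ℝ := Matrix.of fun i m : Fin n => (phi α β (i:ℕ)).coeff (m:ℕ)
    with hA
  have hM : Matrix.of (fun i j : Fin n => (phi α β (i:ℕ)).eval (l j))
      = A * (Matrix.vandermonde l)ᵀ := by
    ext i j
    rw [Matrix.mul_apply]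
    simp only [hA, Matrix.of_apply, Matrix.transpose_apply, Matrix.vandermonde_apply]
    have hdeg : (phi α β (i:ℕ)).natDegree < n := by
      have := natDegree_phi_le α β (i:ℕ)
      have := i.isLt
      omega
    rw [Polynomial.eval_eq_sum_range' hdeg, ← Fin.sum_univ_eq_sum_range]
  have ht : A.BlockTriangular OrderDual.toDual := by
    intro i j hij
    have hij' : (i:ℕ) < (j:ℕ) := hij
    simp only [hA, Matrix.of_apply]
    exact Polynomial.coeff_eq_zero_of_natDegree_lt
      (lt_of_le_of_lt (natDegree_phi_le α β (i:ℕ)) hij')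
  rw [hM, Matrix.det_mul, Matrix.det_transpose, Matrix.det_of_lowerTriangular A ht]
  congr 1
  exact Finset.prod_congr rfl fun i _ => coeff_phi_cC α β (i:ℕ)

lemma sign_mul_self {n : ℕ} (σ : Equiv.Perm (Fin n)) :
    ((Equiv.Perm.sign σ : ℤ) : ℝ) * ((Equiv.Perm.sign σ : ℤ) : ℝ) = 1 := by
  rcases Int.units_eq_one_or (Equiv.Perm.sign σ) with h | h <;> rw [h] <;> norm_num

def g (α β a b : ℕ) (t : ℝ) : ℝ :=
  (phi α β a).eval t * (phi α β b).eval t * (t^α * (1-t)^β)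

lemma g_cont (α β a b : ℕ) : Continuous (g α β a b) := by
  unfold g
  fun_prop

lemma jacobiWeight_eq {n : ℕ} (α β : ℕ) (l : Fin n → ℝ) :
    jacobiWeight n α β l = ((∏ i : Fin n, cC α β (i:ℕ))⁻¹)^2 *
      ∑ σ : Equiv.Perm (Fin n), ∑ τ : Equiv.Perm (Fin n),
        ((Equiv.Perm.sign σ : ℤ) : ℝ) * ((Equiv.Perm.sign τ : ℤ) : ℝ) *
          ∏ i : Fin n, g α β (σ i : ℕ) (τ i : ℕ) (l i) := by
  have hprodC : (∏ i : Fin n, cC α β (i:ℕ)) ≠ 0 :=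
    Finset.prod_ne_zero_iff.mpr fun i _ => cC_ne_zero α β i
  -- step 1 : squared vandermonde
  have h1 : (∏ i : Fin n, ∏ j ∈ Finset.Ioi i, (l i - l j) ^ 2)
      = (Matrix.det (Matrix.vandermonde l))^2 := by
    rw [Matrix.det_vandermonde, ← Finset.prod_pow]
    refine Finset.prod_congr rfl fun i _ => ?_
    rw [← Finset.prod_pow]
    refine Finset.prod_congr rfl fun j _ => ?_
    ring
  -- step 2 : det M
  have h2 : Matrix.det (Matrix.vandermonde l)
      = (∏ i : Fin n, cC α β (i:ℕ))⁻¹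
        * Matrix.det (Matrix.of fun i j : Fin n => (phi α β (i:ℕ)).eval (l j)) := by
    rw [det_phi_matrix]
    field_simp
  -- step 3 : Leibniz
  have h3 : Matrix.det (Matrix.of fun i j : Fin n => (phi α β (i:ℕ)).eval (l j))
      = ∑ σ : Equiv.Perm (Fin n), ((Equiv.Perm.sign σ : ℤ) : ℝ)
          * ∏ i : Fin n, (phi α β (σ i : ℕ)).eval (l i) := by
    rw [Matrix.det_apply]
    refine Finset.sum_congr rfl fun σ _ => ?_
    rw [Units.smul_def, zsmul_eq_mul]
    push_cast
    rfl
  have hg : ∀ σ τ : Equiv.Perm (Fin n), ∏ i : Fin n, g α β (σ i : ℕ) (τ i : ℕ) (l i)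
      = (∏ i : Fin n, (phi α β (σ i : ℕ)).eval (l i))
        * (∏ i : Fin n, (phi α β (τ i : ℕ)).eval (l i))
        * (∏ i : Fin n, (l i)^α * (1 - l i)^β) := by
    intro σ τ
    rw [← Finset.prod_mul_distrib, ← Finset.prod_mul_distrib]
    exact Finset.prod_congr rfl fun i _ => rfl
  have hsum : ∑ σ : Equiv.Perm (Fin n), ∑ τ : Equiv.Perm (Fin n),
        ((Equiv.Perm.sign σ : ℤ) : ℝ) * ((Equiv.Perm.sign τ : ℤ) : ℝ)
          * ∏ i : Fin n, g α β (σ i : ℕ) (τ i : ℕ) (l i)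
      = ((∑ σ : Equiv.Perm (Fin n), ((Equiv.Perm.sign σ : ℤ) : ℝ)
          * ∏ i : Fin n, (phi α β (σ i : ℕ)).eval (l i))^2)
        * (∏ i : Fin n, (l i)^α * (1 - l i)^β) := by
    rw [sq, Finset.sum_mul_sum, Finset.sum_mul]
    refine Finset.sum_congr rfl fun σ _ => ?_
    rw [Finset.sum_mul]
    refine Finset.sum_congr rfl fun τ _ => ?_
    rw [hg σ τ]
    ring
  rw [jacobiWeight, h1, h2, mul_pow, h3, hsum]
  ring

end JacobiAux

namespace JacobiAux
open MeasureTheory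

def box (n : ℕ) : Set (Fin n → ℝ) := Set.univ.pi fun _ : Fin n => Set.Icc (0:ℝ) 1

lemma g_integral (α β a b : ℕ) :
    ∫ t in Set.Icc (0:ℝ) 1, g α β a b t = if a = b then bCoef a α β else 0 := by
  rw [MeasureTheory.integral_Icc_eq_integral_Ioc, ← intervalIntegral.integral_of_le zero_le_one]
  exact orth α β a b

lemma box_integral {n : ℕ} (f : Fin n → ℝ → ℝ) :
    ∫ l in box n, (∏ i, f i (l i)) = ∏ i, ∫ t in Set.Icc (0:ℝ) 1, f i t := by
  unfold box
  rw [← MeasureTheory.integral_indicator (MeasurableSet.univ_pi fun _ => measurableSet_Icc)]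
  have heq : (Set.univ.pi fun _ : Fin n => Set.Icc (0:ℝ) 1).indicator
        (fun l : Fin n → ℝ => ∏ i, f i (l i))
      = fun l : Fin n → ℝ => ∏ i, (Set.Icc (0:ℝ) 1).indicator (f i) (l i) := by
    funext l
    by_cases hl : l ∈ Set.univ.pi fun _ : Fin n => Set.Icc (0:ℝ) 1
    · rw [Set.indicator_of_mem hl]
      refine Finset.prod_congr rfl fun i _ => ?_
      rw [Set.indicator_of_mem (hl i (Set.mem_univ i))]
    · rw [Set.indicator_of_notMem hl]
      rw [Set.mem_univ_pi] at hl
      push_neg at hl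
      obtain ⟨i, hi⟩ := hl
      symm
      refine Finset.prod_eq_zero (Finset.mem_univ i) ?_
      rw [Set.indicator_of_notMem hi]
  rw [heq]
  rw [MeasureTheory.integral_fintype_prod_volume_eq_prod
    (fun i => (Set.Icc (0:ℝ) 1).indicator (f i))]
  exact Finset.prod_congr rfl fun i _ =>
    (MeasureTheory.integral_indicator measurableSet_Icc)

lemma isCompact_box (n : ℕ) : IsCompact (box n) :=
  isCompact_univ_pi fun _ => isCompact_Icc

lemma integrableOn_box_prod {n : ℕ} (f : Fin n → ℝ → ℝ) (hf : ∀ i, Continuous (f i)) :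
    MeasureTheory.IntegrableOn (fun l : Fin n → ℝ => ∏ i, f i (l i)) (box n) := by
  apply ContinuousOn.integrableOn_compact (isCompact_box n)
  exact (continuous_finset_prod _ fun i _ => (hf i).comp (continuous_apply i)).continuousOn

lemma prod_if_perm {n : ℕ} (α β : ℕ) (σ τ : Equiv.Perm (Fin n)) :
    (∏ i : Fin n, if ((σ i : Fin n) : ℕ) = ((τ i : Fin n) : ℕ)
        then bCoef ((σ i : Fin n) : ℕ) α β else 0)
      = if σ = τ then ∏ i : Fin n, bCoef (i : ℕ) α β else 0 := by
  by_cases h : σ = τ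
  · subst h
    rw [if_pos rfl]
    rw [Finset.prod_congr rfl (fun i _ => if_pos rfl)]
    exact Equiv.prod_comp σ (fun i : Fin n => bCoef (i : ℕ) α β)
  · rw [if_neg h]
    have hex : ∃ i, σ i ≠ τ i := by
      by_contra hc
      push_neg at hc
      exact h (Equiv.ext hc)
    obtain ⟨i, hi⟩ := hex
    refine Finset.prod_eq_zero (Finset.mem_univ i) ?_
    rw [if_neg]
    intro hc
    exact hi (Fin.ext hc)

lemma Z_value (n α β : ℕ) :
    ∫ l in box n, jacobiWeight n α β l
      = ((∏ i : Fin n, cC α β (i:ℕ))⁻¹)^2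
          * ((n.factorial : ℝ) * ∏ i : Fin n, bCoef (i:ℕ) α β) := by
  simp_rw [jacobiWeight_eq α β]
  rw [MeasureTheory.integral_const_mul]
  congr 1
  have hint : ∀ σ τ : Equiv.Perm (Fin n), IntegrableOn (fun l : Fin n → ℝ =>
      ((Equiv.Perm.sign σ : ℤ) : ℝ) * ((Equiv.Perm.sign τ : ℤ) : ℝ)
        * ∏ i : Fin n, g α β (σ i : ℕ) (τ i : ℕ) (l i)) (box n) := by
    intro σ τ
    have heq : (fun l : Fin n → ℝ => ((Equiv.Perm.sign σ : ℤ) : ℝ) * ((Equiv.Perm.sign τ : ℤ) : ℝ)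
          * ∏ i : Fin n, g α β (σ i : ℕ) (τ i : ℕ) (l i))
        = fun l : Fin n → ℝ => (((Equiv.Perm.sign σ : ℤ) : ℝ) * ((Equiv.Perm.sign τ : ℤ) : ℝ))
          * ∏ i : Fin n, (fun t => g α β (σ i : ℕ) (τ i : ℕ) t) (l i) := by
      funext l; ring
    rw [heq]
    exact ((integrableOn_box_prod _ fun i => g_cont α β _ _).const_mul _)
  rw [MeasureTheory.integral_finset_sum _
    (fun σ _ => integrable_finset_sum _ (fun τ _ => hint σ τ))]
  have hterm : ∀ σ τ : Equiv.Perm (Fin n),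
      (∫ l in box n, ((Equiv.Perm.sign σ : ℤ) : ℝ) * ((Equiv.Perm.sign τ : ℤ) : ℝ)
          * ∏ i : Fin n, g α β (σ i : ℕ) (τ i : ℕ) (l i))
        = ((Equiv.Perm.sign σ : ℤ) : ℝ) * ((Equiv.Perm.sign τ : ℤ) : ℝ)
          * if σ = τ then ∏ i : Fin n, bCoef (i : ℕ) α β else 0 := by
    intro σ τ
    have heq : (fun l : Fin n → ℝ => ((Equiv.Perm.sign σ : ℤ) : ℝ) * ((Equiv.Perm.sign τ : ℤ) : ℝ)
          * ∏ i : Fin n, g α β (σ i : ℕ) (τ i : ℕ) (l i))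
        = fun l : Fin n → ℝ => (((Equiv.Perm.sign σ : ℤ) : ℝ) * ((Equiv.Perm.sign τ : ℤ) : ℝ))
          * ∏ i : Fin n, (fun t => g α β (σ i : ℕ) (τ i : ℕ) t) (l i) := by
      funext l; ring
    rw [heq, MeasureTheory.integral_const_mul, box_integral]
    congr 1
    rw [Finset.prod_congr rfl (fun i _ => g_integral α β (σ i : ℕ) (τ i : ℕ))]
    exact prod_if_perm α β σ τ
  have hstep : ∀ σ : Equiv.Perm (Fin n),
      (∫ l in box n, ∑ τ : Equiv.Perm (Fin n),
          ((Equiv.Perm.sign σ : ℤ) : ℝ) * ((Equiv.Perm.sign τ : ℤ) : ℝ)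
            * ∏ i : Fin n, g α β (σ i : ℕ) (τ i : ℕ) (l i))
        = ∏ i : Fin n, bCoef (i : ℕ) α β := by
    intro σ
    rw [MeasureTheory.integral_finset_sum _ (fun τ _ => hint σ τ)]
    rw [Finset.sum_congr rfl fun τ _ => hterm σ τ]
    rw [Finset.sum_eq_single σ]
    · rw [if_pos rfl, sign_mul_self, one_mul]
    · intro τ _ hτ
      rw [if_neg (fun hc => hτ hc.symm), mul_zero]
    · intro hc
      exact absurd (Finset.mem_univ σ) hc
  rw [Finset.sum_congr rfl fun σ _ => hstep σ]
  rw [Finset.sum_const, Finset.card_univ, Fintype.card_perm, Fintype.card_fin, nsmul_eq_mul]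

end JacobiAux

namespace JacobiAux
open MeasureTheory

lemma perm_succ_ext {N : ℕ} (σ τ : Equiv.Perm (Fin (N+1)))
    (h : ∀ j : Fin N, σ j.succ = τ j.succ) : σ = τ := by
  have h0 : σ 0 = τ 0 := by
    rcases Fin.eq_zero_or_eq_succ (τ.symm (σ 0)) with h1 | ⟨j, hj⟩
    · have := congrArg τ h1
      simpa using this
    · exfalso
      have h2 : σ 0 = τ j.succ := by
        have := congrArg τ hj
        simpa using this
      rw [← h j] at h2
      have h3 := σ.injective h2
      exact (Fin.succ_ne_zero j) h3.symm
  refine Equiv.ext fun i => ?_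
  rcases Fin.eq_zero_or_eq_succ i with rfl | ⟨j, rfl⟩
  · exact h0
  · exact h j

lemma marginal_value (N α β : ℕ) (x : ℝ) :
    (∫ rest in box N, jacobiWeight (N + 1) α β (Fin.cons x rest))
      = ((∏ i : Fin (N+1), cC α β (i:ℕ))⁻¹)^2 * ((N.factorial : ℝ)
          * ((∏ i : Fin (N+1), bCoef (i:ℕ) α β)
          * ∑ k : Fin (N+1), (bCoef (k:ℕ) α β)⁻¹ * g α β (k:ℕ) (k:ℕ) x)) := by
  simp_rw [jacobiWeight_eq α β]
  rw [MeasureTheory.integral_const_mul]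
  congr 1
  have hsplit : ∀ (σ τ : Equiv.Perm (Fin (N+1))) (rest : Fin N → ℝ),
      (∏ i : Fin (N+1), g α β (σ i : ℕ) (τ i : ℕ) ((Fin.cons x rest : Fin (N+1) → ℝ) i))
        = g α β (σ 0 : ℕ) (τ 0 : ℕ) x
          * ∏ j : Fin N, g α β (σ j.succ : ℕ) (τ j.succ : ℕ) (rest j) := by
    intro σ τ rest
    rw [Fin.prod_univ_succ]
    simp only [Fin.cons_zero, Fin.cons_succ]
  have hint : ∀ σ τ : Equiv.Perm (Fin (N+1)), IntegrableOn (fun rest : Fin N → ℝ =>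
      ((Equiv.Perm.sign σ : ℤ) : ℝ) * ((Equiv.Perm.sign τ : ℤ) : ℝ)
        * ∏ i : Fin (N+1), g α β (σ i : ℕ) (τ i : ℕ) ((Fin.cons x rest : Fin (N+1) → ℝ) i)) (box N) := by
    intro σ τ
    have heq : (fun rest : Fin N → ℝ => ((Equiv.Perm.sign σ : ℤ):ℝ) * ((Equiv.Perm.sign τ : ℤ):ℝ)
          * ∏ i : Fin (N+1), g α β (σ i : ℕ) (τ i : ℕ) ((Fin.cons x rest : Fin (N+1) → ℝ) i))
        = fun rest : Fin N → ℝ => (((Equiv.Perm.sign σ : ℤ):ℝ) * ((Equiv.Perm.sign τ : ℤ):ℝ)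
            * g α β (σ 0 : ℕ) (τ 0 : ℕ) x)
          * ∏ j : Fin N, (fun t => g α β (σ j.succ : ℕ) (τ j.succ : ℕ) t) (rest j) := by
      funext rest
      rw [hsplit σ τ rest]
      ring
    rw [heq]
    exact ((integrableOn_box_prod _ fun j => g_cont α β _ _).const_mul _)
  rw [MeasureTheory.integral_finset_sum _
    (fun σ _ => integrable_finset_sum _ (fun τ _ => hint σ τ))]
  have hterm : ∀ σ τ : Equiv.Perm (Fin (N+1)),
      (∫ rest in box N, ((Equiv.Perm.sign σ : ℤ):ℝ) * ((Equiv.Perm.sign τ : ℤ):ℝ)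
          * ∏ i : Fin (N+1), g α β (σ i : ℕ) (τ i : ℕ) ((Fin.cons x rest : Fin (N+1) → ℝ) i))
        = ((Equiv.Perm.sign σ : ℤ):ℝ) * ((Equiv.Perm.sign τ : ℤ):ℝ)
            * g α β (σ 0 : ℕ) (τ 0 : ℕ) x
          * if σ = τ then ∏ j : Fin N, bCoef ((σ j.succ : Fin (N+1)) : ℕ) α β else 0 := by
    intro σ τ
    have heq : (fun rest : Fin N → ℝ => ((Equiv.Perm.sign σ : ℤ):ℝ) * ((Equiv.Perm.sign τ : ℤ):ℝ)
          * ∏ i : Fin (N+1), g α β (σ i : ℕ) (τ i : ℕ) ((Fin.cons x rest : Fin (N+1) → ℝ) i))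
        = fun rest : Fin N → ℝ => (((Equiv.Perm.sign σ : ℤ):ℝ) * ((Equiv.Perm.sign τ : ℤ):ℝ)
            * g α β (σ 0 : ℕ) (τ 0 : ℕ) x)
          * ∏ j : Fin N, (fun t => g α β (σ j.succ : ℕ) (τ j.succ : ℕ) t) (rest j) := by
      funext rest
      rw [hsplit σ τ rest]
      ring
    rw [heq, MeasureTheory.integral_const_mul, box_integral]
    rw [Finset.prod_congr rfl (fun j _ => g_integral α β (σ j.succ : ℕ) (τ j.succ : ℕ))]
    have hpp : (∏ j : Fin N, if ((σ j.succ : Fin (N+1)) : ℕ) = ((τ j.succ : Fin (N+1)) : ℕ)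
          then bCoef ((σ j.succ : Fin (N+1)) : ℕ) α β else 0)
        = if σ = τ then ∏ j : Fin N, bCoef ((σ j.succ : Fin (N+1)) : ℕ) α β else 0 := by
      by_cases h : σ = τ
      · subst h
        rw [if_pos rfl]
        exact Finset.prod_congr rfl fun j _ => if_pos rfl
      · rw [if_neg h]
        have hex : ∃ j : Fin N, σ j.succ ≠ τ j.succ := by
          by_contra hc
          push_neg at hc
          exact h (perm_succ_ext σ τ hc)
        obtain ⟨j, hj⟩ := hex
        refine Finset.prod_eq_zero (Finset.mem_univ j) ?_
        rw [if_neg (fun hc => hj (Fin.ext hc))]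
    rw [hpp]
  have hstep : ∀ σ : Equiv.Perm (Fin (N+1)),
      (∫ rest in box N, ∑ τ : Equiv.Perm (Fin (N+1)),
          ((Equiv.Perm.sign σ : ℤ):ℝ) * ((Equiv.Perm.sign τ : ℤ):ℝ)
            * ∏ i : Fin (N+1), g α β (σ i : ℕ) (τ i : ℕ) ((Fin.cons x rest : Fin (N+1) → ℝ) i))
        = g α β (σ 0 : ℕ) (σ 0 : ℕ) x
            * ∏ j : Fin N, bCoef ((σ j.succ : Fin (N+1)) : ℕ) α β := by
    intro σ
    rw [MeasureTheory.integral_finset_sum _ (fun τ _ => hint σ τ)]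
    rw [Finset.sum_congr rfl fun τ _ => hterm σ τ]
    rw [Finset.sum_eq_single σ]
    · rw [if_pos rfl, sign_mul_self, one_mul]
    · intro τ _ hτ
      rw [if_neg (fun hc => hτ hc.symm), mul_zero]
    · intro hc
      exact absurd (Finset.mem_univ σ) hc
  rw [Finset.sum_congr rfl fun σ _ => hstep σ]
  have hper : ∀ σ : Equiv.Perm (Fin (N+1)),
      g α β (σ 0 : ℕ) (σ 0 : ℕ) x * ∏ j : Fin N, bCoef ((σ j.succ : Fin (N+1)) : ℕ) α β
        = (bCoef ((σ 0 : Fin (N+1)) : ℕ) α β)⁻¹ * g α β (σ 0 : ℕ) (σ 0 : ℕ) x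
            * ∏ i : Fin (N+1), bCoef (i : ℕ) α β := by
    intro σ
    have h1 : ∏ i : Fin (N+1), bCoef (i:ℕ) α β
        = ∏ i : Fin (N+1), bCoef ((σ i : Fin (N+1)):ℕ) α β :=
      (Equiv.prod_comp σ (fun i : Fin (N+1) => bCoef (i:ℕ) α β)).symm
    rw [h1, Fin.prod_univ_succ]
    have hb := bCoef_ne_zero ((σ 0 : Fin (N+1)) : ℕ) α β
    field_simp
  rw [Finset.sum_congr rfl fun σ _ => hper σ]
  have hdec : ∑ σ : Equiv.Perm (Fin (N+1)),
      ((bCoef ((σ 0 : Fin (N+1)) : ℕ) α β)⁻¹ * g α β ((σ 0 : Fin (N+1)):ℕ) ((σ 0 : Fin (N+1)):ℕ) x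
        * ∏ i : Fin (N+1), bCoef (i : ℕ) α β)
      = (N.factorial : ℝ) * ∑ k : Fin (N+1),
          ((bCoef (k:ℕ) α β)⁻¹ * g α β (k:ℕ) (k:ℕ) x * ∏ i : Fin (N+1), bCoef (i:ℕ) α β) := by
    rw [← Equiv.sum_comp (Equiv.Perm.decomposeFin.symm)
      (fun σ : Equiv.Perm (Fin (N+1)) => (bCoef ((σ 0 : Fin (N+1)):ℕ) α β)⁻¹
        * g α β ((σ 0 : Fin (N+1)):ℕ) ((σ 0 : Fin (N+1)):ℕ) x
        * ∏ i : Fin (N+1), bCoef (i:ℕ) α β)]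
    rw [Fintype.sum_prod_type]
    simp only [Equiv.Perm.decomposeFin_symm_apply_zero]
    rw [Finset.sum_congr rfl (fun p _ => Finset.sum_const _)]
    simp only [Finset.card_univ, Fintype.card_perm, Fintype.card_fin, nsmul_eq_mul]
    rw [← Finset.mul_sum]
  rw [hdec]
  rw [Finset.mul_sum, Finset.mul_sum, Finset.mul_sum]
  refine Finset.sum_congr rfl fun k _ => ?_
  ring

end JacobiAux


open JacobiAux

/-- **Marginal eigenvalue density of the Jacobi ensemble (Appendix A).**
For `n = N + 1 ≥ 1`, integrating the Jacobi-ensemble weight over the last `N`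
eigenvalues gives
`(Z/n) ∑_{k<n} b_{k,α,β}⁻¹ [P_k^{(α,β)}(1−2x)]² x^α (1−x)^β`, where `Z` is the
total mass; i.e. the marginal density of one unordered eigenvalue is
`(1/n) ∑_{k<n} b_{k,α,β}⁻¹ [P_k^{(α,β)}(1−2x)]² x^α (1−x)^β`. -/
theorem jacobi_marginal_density (N α β : ℕ) (x : ℝ) (hx : x ∈ Set.Icc (0:ℝ) 1) (Z : ℝ)
    (hZ : Z = ∫ l in Set.univ.pi fun _ : Fin (N + 1) => Set.Icc (0:ℝ) 1,
        jacobiWeight (N + 1) α β l) :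
    (∫ rest in Set.univ.pi fun _ : Fin N => Set.Icc (0:ℝ) 1,
        jacobiWeight (N + 1) α β (Fin.cons x rest))
      = (Z / (N + 1)) * ∑ k ∈ Finset.range (N + 1),
          (bCoef k α β)⁻¹ * (jacobiP α β k (1 - 2 * x)) ^ 2 * x ^ α * (1 - x) ^ β := by
  have hZv : Z = ((∏ i : Fin (N+1), cC α β (i:ℕ))⁻¹)^2
      * (((N+1).factorial : ℝ) * ∏ i : Fin (N+1), bCoef (i:ℕ) α β) := by
    rw [hZ]
    exact Z_value (N+1) α β
  have hM' : (∫ rest in Set.univ.pi fun _ : Fin N => Set.Icc (0:ℝ) 1,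
        jacobiWeight (N + 1) α β (Fin.cons x rest))
      = ((∏ i : Fin (N+1), cC α β (i:ℕ))⁻¹)^2 * ((N.factorial : ℝ)
          * ((∏ i : Fin (N+1), bCoef (i:ℕ) α β)
          * ∑ k : Fin (N+1), (bCoef (k:ℕ) α β)⁻¹ * g α β (k:ℕ) (k:ℕ) x)) :=
    marginal_value N α β x
  rw [hM']
  have hsum : ∑ k ∈ Finset.range (N + 1),
        (bCoef k α β)⁻¹ * (jacobiP α β k (1 - 2 * x)) ^ 2 * x ^ α * (1 - x) ^ β
      = ∑ k : Fin (N+1), (bCoef (k:ℕ) α β)⁻¹ * g α β (k:ℕ) (k:ℕ) x := by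
    rw [← Fin.sum_univ_eq_sum_range
      (fun k => (bCoef k α β)⁻¹ * (jacobiP α β k (1 - 2 * x)) ^ 2 * x ^ α * (1 - x) ^ β) (N+1)]
    refine Finset.sum_congr rfl fun k _ => ?_
    have h := jacobiP_sq α β (k:ℕ) x hx
    unfold g
    rw [show (1 : ℝ) - 2*x = 1 - 2 * x from rfl] at h
    linear_combination (bCoef (k:ℕ) α β)⁻¹ * h
  rw [hsum, hZv]
  have hfac : (((N+1).factorial : ℝ)) = ((N:ℝ)+1) * N.factorial := by
    push_cast [Nat.factorial_succ]
    ring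
  rw [hfac]
  have hN1 : ((N:ℝ)+1) ≠ 0 := by positivity
  have hC : (∏ i : Fin (N+1), cC α β (i:ℕ)) ≠ 0 :=
    Finset.prod_ne_zero_iff.mpr fun i _ => cC_ne_zero α β (i:ℕ)
  have hkey : (((∏ i : Fin (N+1), cC α β (i:ℕ))⁻¹)^2
        * (((N:ℝ)+1) * (N.factorial : ℝ) * ∏ i : Fin (N+1), bCoef (i:ℕ) α β)) / ((N:ℝ)+1)
      = ((∏ i : Fin (N+1), cC α β (i:ℕ))⁻¹)^2
        * ((N.factorial : ℝ) * ∏ i : Fin (N+1), bCoef (i:ℕ) α β) := by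
    field_simp
  rw [hkey]
  ring
end
end

section
/- (Orthogonality of Jacobi polynomials.) Let α, β be nonnegative integers. For all natural numbers n, k, ∫_{−1}^{1} (1−x)^α (1+x)^β · P_n^{(α,β)}(x) · P_k^{(α,β)}(x) dx = a_{k,α,β} · δ_{nk}, where a_{k,α,β} = (2^{α+β+1}/(2k+α+β+1)) · C(2k+α+β, k) · C(2k+α+β, k+α)^{−1} and δ_{nk} is the Kronecker delta. -/
open MeasureTheory

noncomputable section

/-- The normalization constant
`a_{k,α,β} = (2^{α+β+1}/(2k+α+β+1)) C(2k+α+β, k) C(2k+α+β, k+α)⁻¹`. -/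
def aCoef (k α β : ℕ) : ℝ :=
  (2 ^ (α + β + 1) / (2 * k + α + β + 1)) * ((2 * k + α + β).choose k)
    * (((2 * k + α + β).choose (k + α) : ℝ))⁻¹

namespace JacobiAux

open Polynomial Finset


/-- The polynomial `(1-X)^a (1+X)^b`. -/
def fP (a b : ℕ) : Polynomial ℝ := (1 - X) ^ a * (1 + X) ^ b

lemma eval_fP (a b : ℕ) (x : ℝ) : (fP a b).eval x = (1 - x) ^ a * (1 + x) ^ b := by
  simp [fP]

lemma iter_deriv_oneSub (j p : ℕ) (h : j ≤ p) :
    derivative^[j] ((1 - X : Polynomial ℝ) ^ p)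
      = C ((-1) ^ j * ((p.descFactorial j : ℕ) : ℝ)) * (1 - X) ^ (p - j) := by
  induction j with
  | zero => simp
  | succ j ih =>
    have hj : j ≤ p := by omega
    rw [Function.iterate_succ_apply', ih hj]
    have h1 : derivative ((1 - X : Polynomial ℝ) ^ (p - j))
        = C (p - j : ℝ) * (1 - X) ^ (p - j - 1) * (-1) := by
      rw [derivative_pow]
      have : derivative (1 - X : Polynomial ℝ) = -1 := by
        simp
      rw [this]
      push_cast [Nat.cast_sub hj]
      ring
    rw [derivative_C_mul, h1]
    have h2 : p - (j + 1) = p - j - 1 := by omega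
    rw [Nat.descFactorial_succ, h2]
    push_cast [Nat.cast_sub hj]
    simp only [C_mul, C_pow, C_neg, C_1, C_sub]
    ring

lemma iter_deriv_onePlus (j p : ℕ) (h : j ≤ p) :
    derivative^[j] ((1 + X : Polynomial ℝ) ^ p)
      = C (((p.descFactorial j : ℕ) : ℝ)) * (1 + X) ^ (p - j) := by
  induction j with
  | zero => simp
  | succ j ih =>
    have hj : j ≤ p := by omega
    rw [Function.iterate_succ_apply', ih hj]
    have h1 : derivative ((1 + X : Polynomial ℝ) ^ (p - j))
        = C (p - j : ℝ) * (1 + X) ^ (p - j - 1) := by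
      rw [derivative_pow]
      have : derivative (1 + X : Polynomial ℝ) = 1 := by simp
      rw [this]
      push_cast [Nat.cast_sub hj]
      ring
    rw [derivative_C_mul, h1]
    have h2 : p - (j + 1) = p - j - 1 := by omega
    rw [Nat.descFactorial_succ, h2]
    push_cast [Nat.cast_sub hj]
    simp only [C_mul, C_pow, C_neg, C_1, C_sub]
    ring


/-- The polynomial part of the Jacobi polynomial (up to the constant `c_n`). -/
def qP (α β n : ℕ) : Polynomial ℝ :=
  ∑ j ∈ range (n + 1),
    C ((n.choose j : ℝ) * (-1) ^ (n - j) * ((n + α).descFactorial (n - j))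
        * ((n + β).descFactorial j)) * (1 - X) ^ j * (1 + X) ^ (n - j)

/-- Rodrigues / Leibniz identity at the polynomial level. -/
lemma key (α β n : ℕ) :
    derivative^[n] (fP (n + α) (n + β)) = (1 - X) ^ α * (1 + X) ^ β * qP α β n := by
  rw [fP, Polynomial.iterate_derivative_mul, qP, Finset.mul_sum]
  refine Finset.sum_congr rfl fun j hj => ?_
  have hjn : j ≤ n := by simpa using Nat.lt_succ_iff.mp (Finset.mem_range.mp hj)
  rw [iter_deriv_oneSub (n - j) (n + α) (by omega), iter_deriv_onePlus j (n + β) (by omega)]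
  have e1 : n + α - (n - j) = α + j := by omega
  have e2 : n + β - j = β + (n - j) := by omega
  rw [e1, e2, nsmul_eq_mul]
  simp only [C_mul, C_pow, C_neg, C_1, pow_add, Polynomial.C_eq_natCast]
  ring

/-- Vandermonde-type identity. -/
lemma vdm (α β n : ℕ) :
    ∑ j ∈ range (n + 1),
        n.choose j * ((n + α).descFactorial (n - j)) * ((n + β).descFactorial j)
      = n.factorial * ((2 * n + α + β).choose n) := by
  have h2 : 2 * n + α + β = (n + β) + (n + α) := by omega
  rw [h2, Nat.add_choose_eq, Finset.Nat.sum_antidiagonal_eq_sum_range_succ_mk, Finset.mul_sum]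
  refine Finset.sum_congr rfl fun j hj => ?_
  have hjn : j ≤ n := by simpa using Nat.lt_succ_iff.mp (Finset.mem_range.mp hj)
  rw [Nat.descFactorial_eq_factorial_mul_choose, Nat.descFactorial_eq_factorial_mul_choose,
    ← Nat.choose_mul_factorial_mul_factorial hjn]
  ring

lemma natDegree_qP_le (α β n : ℕ) : (qP α β n).natDegree ≤ n := by
  refine (Polynomial.natDegree_sum_le _ _).trans ?_
  rw [Finset.fold_max_le]
  refine ⟨Nat.zero_le _, fun j hj => ?_⟩
  have hjn : j ≤ n := by simpa using Nat.lt_succ_iff.mp (Finset.mem_range.mp hj)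
  refine (Polynomial.natDegree_mul_le).trans ?_
  have hA : ((C ((n.choose j : ℝ) * (-1) ^ (n - j) * ((n + α).descFactorial (n - j))
        * ((n + β).descFactorial j)) : Polynomial ℝ) * (1 - X) ^ j).natDegree ≤ j := by
    refine (Polynomial.natDegree_mul_le).trans ?_
    simp only [natDegree_C, zero_add]
    refine (Polynomial.natDegree_pow_le).trans ?_
    have : ((1 : Polynomial ℝ) - X).natDegree ≤ 1 := by
      refine (Polynomial.natDegree_sub_le _ _).trans ?_
      simp
    nlinarith
  have hB : (((1 : Polynomial ℝ) + X) ^ (n - j)).natDegree ≤ n - j := by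
    refine (Polynomial.natDegree_pow_le).trans ?_
    have : ((1 : Polynomial ℝ) + X).natDegree ≤ 1 := by
      refine (Polynomial.natDegree_add_le _ _).trans ?_
      simp
    nlinarith
  omega


lemma natDegree_oneSub : ((1 : Polynomial ℝ) - X).natDegree = 1 := by
  rw [show (1 : Polynomial ℝ) - X = -(X - C 1) by rw [C_1]; ring]
  rw [natDegree_neg, natDegree_X_sub_C]

lemma natDegree_onePlus : ((1 : Polynomial ℝ) + X).natDegree = 1 := by
  rw [show (1 : Polynomial ℝ) + X = X + C 1 by rw [C_1]; ring]
  exact natDegree_X_add_C _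

lemma lc_oneSub : ((1 : Polynomial ℝ) - X).leadingCoeff = -1 := by
  rw [leadingCoeff, natDegree_oneSub]
  simp [coeff_one]

lemma lc_onePlus : ((1 : Polynomial ℝ) + X).leadingCoeff = 1 := by
  rw [leadingCoeff, natDegree_onePlus]
  simp [coeff_one]

lemma coeff_qP (α β n : ℕ) :
    (qP α β n).coeff n = (-1) ^ n * (n.factorial : ℝ) * ((2 * n + α + β).choose n : ℝ) := by
  rw [qP, finset_sum_coeff]
  have hterm : ∀ j ∈ range (n + 1),
      (C ((n.choose j : ℝ) * (-1) ^ (n - j) * ((n + α).descFactorial (n - j))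
        * ((n + β).descFactorial j)) * (1 - X) ^ j * (1 + X) ^ (n - j)).coeff n
      = (-1) ^ n * ((n.choose j : ℝ) * ((n + α).descFactorial (n - j))
          * ((n + β).descFactorial j)) := by
    intro j hj
    have hjn : j ≤ n := by simpa using Nat.lt_succ_iff.mp (Finset.mem_range.mp hj)
    rw [mul_assoc, coeff_C_mul]
    have hd : (((1 : Polynomial ℝ) - X) ^ j * (1 + X) ^ (n - j)).natDegree = n := by
      have hne1 : ((1 : Polynomial ℝ) - X) ≠ 0 := by
        intro h
        have := natDegree_oneSub
        rw [h] at this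
        simp at this
      have hne2 : ((1 : Polynomial ℝ) + X) ≠ 0 := by
        intro h
        have := natDegree_onePlus
        rw [h] at this
        simp at this
      rw [natDegree_mul (pow_ne_zero _ hne1) (pow_ne_zero _ hne2), natDegree_pow, natDegree_pow,
        natDegree_oneSub, natDegree_onePlus]
      omega
    have hlc : (((1 : Polynomial ℝ) - X) ^ j * (1 + X) ^ (n - j)).coeff n = (-1) ^ j := by
      have := Polynomial.coeff_natDegree (p := ((1 : Polynomial ℝ) - X) ^ j * (1 + X) ^ (n - j))
      rw [hd] at this
      rw [this, leadingCoeff_mul, leadingCoeff_pow, leadingCoeff_pow, lc_oneSub, lc_onePlus]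
      simp
    rw [hlc]
    have hsign : ((-1 : ℝ)) ^ (n - j) * (-1) ^ j = (-1) ^ n := by
      rw [← pow_add]
      congr 1
      omega
    calc (n.choose j : ℝ) * (-1) ^ (n - j) * ((n + α).descFactorial (n - j))
          * ((n + β).descFactorial j) * (-1) ^ j
        = ((-1 : ℝ)) ^ (n - j) * (-1) ^ j * ((n.choose j : ℝ) * ((n + α).descFactorial (n - j))
          * ((n + β).descFactorial j)) := by ring
      _ = _ := by rw [hsign]
  rw [Finset.sum_congr rfl hterm, ← Finset.mul_sum]
  have hv : (∑ j ∈ range (n + 1), ((n.choose j : ℝ) * ((n + α).descFactorial (n - j))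
      * ((n + β).descFactorial j)))
      = (n.factorial : ℝ) * ((2 * n + α + β).choose n : ℝ) := by
    exact_mod_cast congrArg (Nat.cast : ℕ → ℝ) (vdm α β n)
  rw [hv]
  ring

lemma iter_deriv_const (p : Polynomial ℝ) (k : ℕ) (h : p.natDegree ≤ k) :
    derivative^[k] p = C ((k.factorial : ℝ) * p.coeff k) := by
  ext m
  rw [Polynomial.coeff_iterate_derivative]
  match m with
  | 0 =>
    simp [Nat.descFactorial_self, nsmul_eq_mul]
  | m + 1 =>
    rw [Polynomial.coeff_eq_zero_of_natDegree_lt (by omega)]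
    simp [Polynomial.coeff_C]

lemma eval_one_iter (α β k m : ℕ) (hm : m < k) :
    (derivative^[m] (fP (k + α) (k + β))).eval 1 = 0 := by
  rw [fP, Polynomial.iterate_derivative_mul, eval_finset_sum]
  refine Finset.sum_eq_zero fun j hj => ?_
  have hjm : j ≤ m := by simpa using Nat.lt_succ_iff.mp (Finset.mem_range.mp hj)
  rw [iter_deriv_oneSub (m - j) (k + α) (by omega)]
  have : k + α - (m - j) ≠ 0 := by omega
  simp [this]

lemma eval_negone_iter (α β k m : ℕ) (hm : m < k) :
    (derivative^[m] (fP (k + α) (k + β))).eval (-1) = 0 := by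
  rw [fP, Polynomial.iterate_derivative_mul, eval_finset_sum]
  refine Finset.sum_eq_zero fun j hj => ?_
  have hjm : j ≤ m := by simpa using Nat.lt_succ_iff.mp (Finset.mem_range.mp hj)
  rw [iter_deriv_onePlus j (k + β) (by omega)]
  have : k + β - j ≠ 0 := by omega
  simp [this]


lemma iteratedDeriv_eval (m : ℕ) : ∀ (p : Polynomial ℝ) (x : ℝ),
    iteratedDeriv m (fun y => p.eval y) x = (derivative^[m] p).eval x := by
  induction m with
  | zero => simp
  | succ m ih =>
    intro p x
    rw [iteratedDeriv_succ', Function.iterate_succ_apply]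
    have : deriv (fun y => p.eval y) = fun y => (derivative p).eval y := by
      funext y
      exact Polynomial.deriv p
    rw [this]
    exact ih (derivative p) x

/-- Iterated integration by parts with vanishing boundary terms. -/
lemma ibp (m : ℕ) : ∀ (u v : Polynomial ℝ),
    (∀ i < m, (derivative^[i] v).eval 1 = 0 ∧ (derivative^[i] v).eval (-1) = 0) →
    (∫ x in (-1:ℝ)..1, u.eval x * (derivative^[m] v).eval x)
      = (-1) ^ m * ∫ x in (-1:ℝ)..1, (derivative^[m] u).eval x * v.eval x := by
  induction m with
  | zero => intro u v _; simp
  | succ m ih =>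
    intro u v hv
    rw [Function.iterate_succ_apply, ih u (derivative v) (fun i hi => by
      have := hv (i + 1) (by omega)
      rwa [Function.iterate_succ_apply] at this)]
    have hibp := intervalIntegral.integral_mul_deriv_eq_deriv_mul
      (a := (-1:ℝ)) (b := 1)
      (u := fun x => (derivative^[m] u).eval x) (v := fun x => v.eval x)
      (u' := fun x => (derivative^[m + 1] u).eval x)
      (v' := fun x => (derivative v).eval x)
      (fun x _ => by
        rw [Function.iterate_succ_apply']
        exact Polynomial.hasDerivAt _ x)
      (fun x _ => Polynomial.hasDerivAt _ x)
      ((Polynomial.continuous _).intervalIntegrable _ _)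
      ((Polynomial.continuous _).intervalIntegrable _ _)
    rw [hibp]
    have h1 := (hv 0 (by omega)).1
    have h2 := (hv 0 (by omega)).2
    simp only [Function.iterate_zero, id] at h1 h2
    rw [h1, h2]
    ring


lemma betaInt (p : ℕ) : ∀ q : ℕ,
    (∫ x in (-1:ℝ)..1, (1 - x) ^ p * (1 + x) ^ q)
      = 2 ^ (p + q + 1) * (p.factorial : ℝ) * (q.factorial : ℝ) / ((p + q + 1).factorial : ℝ) := by
  induction p with
  | zero =>
    intro q
    simp only [pow_zero, one_mul, Nat.factorial_zero, Nat.cast_one, zero_add]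
    have h1 : (∫ x in (-1:ℝ)..1, (1 + x) ^ q) = (1 + 1 : ℝ) ^ (q + 1) / ((q:ℝ) + 1) := by
      simpa using intervalIntegral.integral_comp_add_left (a := (-1:ℝ)) (b := 1)
        (fun x => x ^ q) 1
    rw [h1, Nat.factorial_succ]
    have hq : ((q:ℝ) + 1) ≠ 0 := by positivity
    push_cast
    field_simp
    ring
  | succ p ih =>
    intro q
    have hq1 : ((q : ℝ) + 1) ≠ 0 := by positivity
    have hibp := intervalIntegral.integral_mul_deriv_eq_deriv_mul
      (a := (-1:ℝ)) (b := 1)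
      (u := fun x => (1 - x) ^ (p + 1))
      (u' := fun x => -((p + 1 : ℝ)) * (1 - x) ^ p)
      (v := fun x => (1 + x) ^ (q + 1) / ((q : ℝ) + 1))
      (v' := fun x => (1 + x) ^ q)
      (fun x _ => by
        have h := (((hasDerivAt_id x).const_sub 1).pow (p + 1))
        simp only [id_eq] at h
        convert h using 1
        · funext y; simp only [Pi.pow_apply]
        · rw [Nat.add_sub_cancel]; push_cast; ring)
      (fun x _ => by
        have h := (((hasDerivAt_id x).const_add 1).pow (q + 1)).div_const ((q : ℝ) + 1)
        simp only [id_eq] at h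
        convert h using 1
        · funext y; simp only [Pi.pow_apply]
        · rw [Nat.add_sub_cancel, mul_one]; push_cast; rw [mul_div_cancel_left₀ _ hq1])
      ((Continuous.intervalIntegrable (by continuity) _ _))
      ((Continuous.intervalIntegrable (by continuity) _ _))
    rw [hibp]
    have hz1 : ((1:ℝ) - 1) ^ (p + 1) = 0 := by norm_num
    have hz2 : ((1:ℝ) + -1) ^ (q + 1) = 0 := by norm_num
    rw [hz1, hz2]
    have hrw : (∫ x in (-1:ℝ)..1, -((p + 1 : ℝ)) * (1 - x) ^ p * ((1 + x) ^ (q + 1) / ((q:ℝ) + 1)))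
        = (-((p + 1 : ℝ)) / ((q:ℝ) + 1)) * ∫ x in (-1:ℝ)..1, (1 - x) ^ p * (1 + x) ^ (q + 1) := by
      rw [← intervalIntegral.integral_const_mul]
      congr 1
      funext x
      ring
    rw [hrw, ih (q + 1)]
    have e1 : p + (q + 1) + 1 = p + q + 2 := by omega
    have e2 : p + 1 + q + 1 = p + q + 2 := by omega
    rw [e1, e2]
    have hfac : ((p + q + 2).factorial : ℝ) ≠ 0 := by positivity
    rw [Nat.factorial_succ (q), Nat.factorial_succ (p)]
    push_cast
    field_simp
    ring

/-- The Rodrigues normalizing constant. -/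
def cJ (n : ℕ) : ℝ := (-1) ^ n / (2 ^ n * (Nat.factorial n))

lemma jacobi_eq (α β n : ℕ) (x : ℝ) (hx1 : (1:ℝ) - x ≠ 0) (hx2 : (1:ℝ) + x ≠ 0) :
    jacobiP α β n x = cJ n * (qP α β n).eval x := by
  unfold jacobiP cJ
  have hfun : (fun y : ℝ => (1 - y) ^ (n + α) * (1 + y) ^ (n + β))
      = fun y : ℝ => (fP (n + α) (n + β)).eval y := by
    funext y
    rw [eval_fP]
  rw [hfun, iteratedDeriv_eval, key]
  simp only [eval_mul, eval_pow, eval_sub, eval_add, eval_one, eval_X]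
  have hz1 : (1 - x) ^ (-(α : ℤ)) = ((1 - x) ^ α)⁻¹ := by
    rw [zpow_neg, zpow_natCast]
  have hz2 : (1 + x) ^ (-(β : ℤ)) = ((1 + x) ^ β)⁻¹ := by
    rw [zpow_neg, zpow_natCast]
  rw [hz1, hz2]
  have h1 : (1 - x) ^ α ≠ 0 := pow_ne_zero _ hx1
  have h2 : (1 + x) ^ β ≠ 0 := pow_ne_zero _ hx2
  field_simp

lemma reduce (α β n k : ℕ) :
    (∫ x in (-1:ℝ)..1, (1 - x) ^ α * (1 + x) ^ β * jacobiP α β n x * jacobiP α β k x)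
      = cJ n * cJ k * ∫ x in (-1:ℝ)..1,
          (qP α β n).eval x * (derivative^[k] (fP (k + α) (k + β))).eval x := by
  rw [← intervalIntegral.integral_const_mul]
  apply intervalIntegral.integral_congr_ae
  have hc : ({1, -1} : Set ℝ).Countable := (Set.finite_singleton (-1:ℝ)).insert 1 |>.countable
  filter_upwards [hc.ae_notMem volume] with x hx _
  have hx' : ¬(x = 1 ∨ x = -1) := by simpa using hx
  push_neg at hx'
  have hx1 : (1:ℝ) - x ≠ 0 := fun h => hx'.1 (by linarith)
  have hx2 : (1:ℝ) + x ≠ 0 := fun h => hx'.2 (by linarith)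
  rw [jacobi_eq α β n x hx1 hx2, jacobi_eq α β k x hx1 hx2, key α β k]
  simp only [eval_mul, eval_pow, eval_sub, eval_add, eval_one, eval_X]
  ring

lemma offdiag (α β n k : ℕ) (h : n < k) :
    (∫ x in (-1:ℝ)..1, (1 - x) ^ α * (1 + x) ^ β * jacobiP α β n x * jacobiP α β k x) = 0 := by
  rw [reduce, ibp k (qP α β n) (fP (k + α) (k + β))
    (fun i hi => ⟨eval_one_iter α β k i hi, eval_negone_iter α β k i hi⟩)]
  have hz : derivative^[k] (qP α β n) = 0 :=
    Polynomial.iterate_derivative_eq_zero (lt_of_le_of_lt (natDegree_qP_le α β n) h)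
  rw [hz]
  simp

lemma diag (α β k : ℕ) :
    (∫ x in (-1:ℝ)..1, (1 - x) ^ α * (1 + x) ^ β * jacobiP α β k x * jacobiP α β k x)
      = aCoef k α β := by
  rw [reduce, ibp k (qP α β k) (fP (k + α) (k + β))
    (fun i hi => ⟨eval_one_iter α β k i hi, eval_negone_iter α β k i hi⟩),
    iter_deriv_const (qP α β k) k (natDegree_qP_le α β k), coeff_qP]
  have hint : (∫ x in (-1:ℝ)..1,
      (C ((k.factorial : ℝ) * ((-1) ^ k * (k.factorial : ℝ) * ((2 * k + α + β).choose k : ℝ)))).eval x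
        * (fP (k + α) (k + β)).eval x)
      = ((k.factorial : ℝ) * ((-1) ^ k * (k.factorial : ℝ) * ((2 * k + α + β).choose k : ℝ)))
        * (2 ^ (k + α + (k + β) + 1) * ((k + α).factorial : ℝ) * ((k + β).factorial : ℝ)
            / (((k + α + (k + β) + 1).factorial : ℝ))) := by
    simp only [eval_C, eval_fP]
    rw [intervalIntegral.integral_const_mul, betaInt]
  rw [hint]
  have e1 : k + α + (k + β) + 1 = 2 * k + α + β + 1 := by omega
  rw [e1]
  -- arithmetic
  unfold cJ aCoef
  have hch : (((2 * k + α + β).choose (k + α)) : ℝ) * ((k + α).factorial : ℝ)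
      * ((k + β).factorial : ℝ) = ((2 * k + α + β).factorial : ℝ) := by
    have h := Nat.choose_mul_factorial_mul_factorial (show k + α ≤ 2 * k + α + β by omega)
    have e2 : 2 * k + α + β - (k + α) = k + β := by omega
    rw [e2] at h
    exact_mod_cast congrArg (Nat.cast : ℕ → ℝ) h
  have hfs : ((2 * k + α + β + 1).factorial : ℝ)
      = ((2 * k + α + β : ℕ) + 1 : ℝ) * ((2 * k + α + β).factorial : ℝ) := by
    rw [Nat.factorial_succ]
    push_cast
    ring
  have hne1 : ((k.factorial : ℝ)) ≠ 0 := by positivity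
  have hne2 : ((2:ℝ) ^ k) ≠ 0 := by positivity
  have hne3 : (((2 * k + α + β).factorial : ℝ)) ≠ 0 := by positivity
  have hne4 : (((2 * k + α + β : ℕ) : ℝ) + 1) ≠ 0 := by positivity
  have hne5 : (((2 * k + α + β).choose (k + α)) : ℝ) ≠ 0 := by
    have := Nat.choose_pos (show k + α ≤ 2 * k + α + β by omega)
    positivity
  have hne6 : (((k + α).factorial : ℝ)) ≠ 0 := by positivity
  have hne7 : (((k + β).factorial : ℝ)) ≠ 0 := by positivity
  have e3 : 2 * k + α + β + 1 = k + k + (α + β + 1) := by omega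
  rw [hfs, e3, pow_add, pow_add]
  rw [← hch]
  push_cast
  rcases Nat.even_or_odd k with he | ho
  · rw [Even.neg_one_pow he]
    field_simp
  · rw [Odd.neg_one_pow ho]
    field_simp

end JacobiAux

open JacobiAux in
/-- **Orthogonality of the Jacobi polynomials:**
`∫_{−1}^{1} (1−x)^α (1+x)^β P_n^{(α,β)}(x) P_k^{(α,β)}(x) dx = a_{k,α,β} δ_{nk}`. -/
theorem jacobiP_orthogonality (α β n k : ℕ) :
    (∫ x in (-1:ℝ)..1, (1 - x) ^ α * (1 + x) ^ β * jacobiP α β n x * jacobiP α β k x)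
      = if n = k then aCoef k α β else 0 := by
  rcases lt_trichotomy n k with h | h | h
  · rw [if_neg (Nat.ne_of_lt h)]
    exact offdiag α β n k h
  · subst h
    rw [if_pos rfl]
    exact diag α β n
  · rw [if_neg (Nat.ne_of_gt h)]
    have hsym : (∫ x in (-1:ℝ)..1, (1 - x) ^ α * (1 + x) ^ β * jacobiP α β n x * jacobiP α β k x)
        = ∫ x in (-1:ℝ)..1, (1 - x) ^ α * (1 + x) ^ β * jacobiP α β k x * jacobiP α β n x := by
      apply intervalIntegral.integral_congr
      intro x _
      ring
    rw [hsym]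
    exact offdiag α β k n h
end
end

section
/- (Laplace-type asymptotic used in Example 1.) Let a and b be nonnegative integers. Then lim_{ρ→∞} (log ∫_0^1 x^a (1−x)^b e^{−ρx/2} dx) / (log ρ) = −(a+1); that is, the integral decays polynomially as ρ^{−(a+1)} on the exponential scale. -/
open Filter MeasureTheory

lemma laplace_pow_div_factorial_le_exp (n : ℕ) {t : ℝ} (ht : 0 ≤ t) :
    t ^ n / n.factorial ≤ Real.exp t := by
  calc t ^ n / n.factorial
      ≤ ∑ i ∈ Finset.range (n + 1), t ^ i / i.factorial :=
        Finset.single_le_sum (f := fun i => t ^ i / (i.factorial : ℝ))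
          (fun i _ => by positivity) (Finset.self_mem_range_succ n)
    _ ≤ Real.exp t := Real.sum_le_exp_of_nonneg ht _

lemma laplace_exp_neg_le (n : ℕ) {t : ℝ} (ht : 0 < t) :
    Real.exp (-t) ≤ n.factorial / t ^ n := by
  have h1 : t ^ n / n.factorial ≤ Real.exp t := laplace_pow_div_factorial_le_exp n ht.le
  have h2 : (0:ℝ) < t ^ n / n.factorial := by positivity
  calc Real.exp (-t) = (Real.exp t)⁻¹ := Real.exp_neg t
    _ ≤ (t ^ n / n.factorial)⁻¹ := by
        apply inv_anti₀ h2 h1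
    _ = n.factorial / t ^ n := by rw [inv_div]

lemma laplace_integrable (a b : ℕ) (ρ u v : ℝ) :
    IntervalIntegrable (fun x : ℝ => x ^ a * (1 - x) ^ b * Real.exp (-ρ * x / 2))
      volume u v := by
  apply Continuous.intervalIntegrable
  continuity

lemma laplace_lb (a b : ℕ) {ρ : ℝ} (hρ : 2 ≤ ρ) :
    (1/2 : ℝ) ^ b * Real.exp (-(1/2)) / (a + 1) * (ρ ^ (a + 1))⁻¹ ≤
      ∫ x in (0:ℝ)..1, x ^ a * (1 - x) ^ b * Real.exp (-ρ * x / 2) := by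
  have hρ0 : (0:ℝ) < ρ := by linarith
  have hr0 : (0:ℝ) < 1 / ρ := by positivity
  have hr1 : (1:ℝ) / ρ ≤ 1 := by
    rw [div_le_one hρ0]; linarith
  have hr2 : (1:ℝ) / ρ ≤ 1 / 2 := by
    apply one_div_le_one_div_of_le <;> linarith
  have hsplit := intervalIntegral.integral_add_adjacent_intervals
    (laplace_integrable a b ρ 0 (1/ρ)) (laplace_integrable a b ρ (1/ρ) 1)
  rw [← hsplit]
  have h2 : (0:ℝ) ≤ ∫ x in (1/ρ:ℝ)..1, x ^ a * (1 - x) ^ b * Real.exp (-ρ * x / 2) := by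
    apply intervalIntegral.integral_nonneg hr1
    intro x hx
    have hx0 : (0:ℝ) ≤ x := le_trans hr0.le hx.1
    have hx1 : x ≤ 1 := hx.2
    have : (0:ℝ) ≤ 1 - x := by linarith
    positivity
  have h1 : (1/2 : ℝ) ^ b * Real.exp (-(1/2)) / (a + 1) * (ρ ^ (a + 1))⁻¹ ≤
      ∫ x in (0:ℝ)..(1/ρ), x ^ a * (1 - x) ^ b * Real.exp (-ρ * x / 2) := by
    have key : ∫ x in (0:ℝ)..(1/ρ), ((1/2 : ℝ) ^ b * Real.exp (-(1/2))) * x ^ a ≤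
        ∫ x in (0:ℝ)..(1/ρ), x ^ a * (1 - x) ^ b * Real.exp (-ρ * x / 2) := by
      apply intervalIntegral.integral_mono_on hr0.le
      · apply Continuous.intervalIntegrable; continuity
      · exact laplace_integrable a b ρ 0 (1/ρ)
      · intro x hx
        have hx0 : (0:ℝ) ≤ x := hx.1
        have hx2 : x ≤ 1 / 2 := le_trans hx.2 hr2
        have hb : (1/2 : ℝ) ^ b ≤ (1 - x) ^ b := by
          apply pow_le_pow_left₀ (by norm_num) (by linarith)
        have hrx : ρ * x ≤ 1 := by
          calc ρ * x ≤ ρ * (1/ρ) := by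
                apply mul_le_mul_of_nonneg_left hx.2 hρ0.le
            _ = 1 := mul_one_div_cancel (ne_of_gt hρ0)
        have he : Real.exp (-(1/2)) ≤ Real.exp (-ρ * x / 2) := by
          apply Real.exp_le_exp.2; linarith
        calc (1/2 : ℝ) ^ b * Real.exp (-(1/2)) * x ^ a
            = x ^ a * ((1/2 : ℝ) ^ b * Real.exp (-(1/2))) := by ring
          _ ≤ x ^ a * ((1 - x) ^ b * Real.exp (-ρ * x / 2)) := by
              apply mul_le_mul_of_nonneg_left _ (pow_nonneg hx0 a)
              exact mul_le_mul hb he (Real.exp_pos _).le (pow_nonneg (by linarith) b)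
          _ = x ^ a * (1 - x) ^ b * Real.exp (-ρ * x / 2) := by ring
    refine le_trans (le_of_eq ?_) key
    rw [intervalIntegral.integral_const_mul, integral_pow]
    have : ((1:ℝ)/ρ) ^ (a + 1) = (ρ ^ (a + 1))⁻¹ := by rw [one_div, inv_pow]
    rw [this]
    push_cast
    ring
  linarith

lemma laplace_ub (a b : ℕ) {ρ : ℝ} (hρ : 2 ≤ ρ) :
    (∫ x in (0:ℝ)..1, x ^ a * (1 - x) ^ b * Real.exp (-ρ * x / 2)) ≤
      (1 / (a + 1) + (a + 2).factorial * 2 ^ (a + 2)) * (ρ ^ (a + 1))⁻¹ := by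
  have hρ0 : (0:ℝ) < ρ := by linarith
  have hr0 : (0:ℝ) < 1 / ρ := by positivity
  have hr1 : (1:ℝ) / ρ ≤ 1 := by rw [div_le_one hρ0]; linarith
  have hsplit := intervalIntegral.integral_add_adjacent_intervals
    (laplace_integrable a b ρ 0 (1/ρ)) (laplace_integrable a b ρ (1/ρ) 1)
  rw [← hsplit]
  have h1 : (∫ x in (0:ℝ)..(1/ρ), x ^ a * (1 - x) ^ b * Real.exp (-ρ * x / 2)) ≤
      (ρ ^ (a + 1))⁻¹ / (a + 1) := by
    have key : (∫ x in (0:ℝ)..(1/ρ), x ^ a * (1 - x) ^ b * Real.exp (-ρ * x / 2)) ≤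
        ∫ x in (0:ℝ)..(1/ρ), x ^ a := by
      apply intervalIntegral.integral_mono_on hr0.le (laplace_integrable a b ρ 0 (1/ρ))
      · apply Continuous.intervalIntegrable; continuity
      · intro x hx
        have hx0 : (0:ℝ) ≤ x := hx.1
        have hx1 : x ≤ 1 := le_trans hx.2 hr1
        have hb : (1 - x) ^ b ≤ 1 := pow_le_one₀ (by linarith) (by linarith)
        have he : Real.exp (-ρ * x / 2) ≤ 1 := by
          apply Real.exp_le_one_iff.2
          nlinarith
        calc x ^ a * (1 - x) ^ b * Real.exp (-ρ * x / 2)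
            ≤ x ^ a * 1 * 1 := by
              apply mul_le_mul (mul_le_mul_of_nonneg_left hb (pow_nonneg hx0 a)) he
                (Real.exp_pos _).le (by positivity)
          _ = x ^ a := by ring
    refine le_trans key (le_of_eq ?_)
    rw [integral_pow]
    have : ((1:ℝ)/ρ) ^ (a + 1) = (ρ ^ (a + 1))⁻¹ := by rw [one_div, inv_pow]
    rw [this]
    push_cast
    ring
  have h2 : (∫ x in (1/ρ:ℝ)..1, x ^ a * (1 - x) ^ b * Real.exp (-ρ * x / 2)) ≤
      (a + 2).factorial * 2 ^ (a + 2) * (ρ ^ (a + 1))⁻¹ := by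
    set C : ℝ := (a + 2).factorial * 2 ^ (a + 2) * (ρ ^ (a + 2))⁻¹ with hC
    have hC0 : 0 < C := by positivity
    have key : (∫ x in (1/ρ:ℝ)..1, x ^ a * (1 - x) ^ b * Real.exp (-ρ * x / 2)) ≤
        ∫ x in (1/ρ:ℝ)..1, C * (x ^ 2)⁻¹ := by
      apply intervalIntegral.integral_mono_on hr1 (laplace_integrable a b ρ (1/ρ) 1)
      · apply ContinuousOn.intervalIntegrable
        apply ContinuousOn.mul continuousOn_const
        apply ContinuousOn.inv₀ (by fun_prop)
        intro x hx
        rw [Set.uIcc_of_le hr1] at hx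
        have : (0:ℝ) < x := lt_of_lt_of_le hr0 hx.1
        positivity
      · intro x hx
        have hx0 : (0:ℝ) < x := lt_of_lt_of_le hr0 hx.1
        have hx1 : x ≤ 1 := hx.2
        have hb : (1 - x) ^ b ≤ 1 := pow_le_one₀ (by linarith) (by linarith)
        have ht : (0:ℝ) < ρ * x / 2 := by positivity
        have he : Real.exp (-ρ * x / 2) ≤ (a + 2).factorial / (ρ * x / 2) ^ (a + 2) := by
          have := laplace_exp_neg_le (a + 2) ht
          have hneg : -ρ * x / 2 = -(ρ * x / 2) := by ring
          rw [hneg]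
          exact this
        calc x ^ a * (1 - x) ^ b * Real.exp (-ρ * x / 2)
            ≤ x ^ a * 1 * ((a + 2).factorial / (ρ * x / 2) ^ (a + 2)) := by
              apply mul_le_mul (mul_le_mul_of_nonneg_left hb (pow_nonneg hx0.le a)) he
                (Real.exp_pos _).le (by positivity)
          _ = C * (x ^ 2)⁻¹ := by
              rw [hC]
              field_simp
              have h2a : (1/2:ℝ)^a * 2^a = 1 := by rw [← mul_pow]; norm_num
              linear_combination (-(x^2*x^a*ρ^2*ρ^a)) * h2a
    refine le_trans key ?_
    have hint : (∫ x in (1/ρ:ℝ)..1, (x ^ 2)⁻¹) = ρ - 1 := by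
      have h0 : (0:ℝ) ∉ Set.uIcc (1/ρ:ℝ) 1 := by
        rw [Set.uIcc_of_le hr1]
        intro h
        exact absurd h.1 (not_le.2 hr0)
      have hz := integral_zpow (a := (1/ρ:ℝ)) (b := 1) (n := -2)
        (Or.inr ⟨by norm_num, h0⟩)
      have heq : ∀ y : ℝ, y ^ (-2:ℤ) = (y ^ 2)⁻¹ := fun y => by
        rw [zpow_neg]
        norm_cast
      simp only [heq] at hz
      rw [hz]
      norm_num
      field_simp
      ring
    rw [intervalIntegral.integral_const_mul, hint]
    calc C * (ρ - 1) ≤ C * ρ := by nlinarith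
      _ = (a + 2).factorial * 2 ^ (a + 2) * (ρ ^ (a + 1))⁻¹ := by
          rw [hC, pow_succ]
          field_simp
          ring
  calc (∫ x in (0:ℝ)..(1/ρ), x ^ a * (1 - x) ^ b * Real.exp (-ρ * x / 2)) +
        ∫ x in (1/ρ:ℝ)..1, x ^ a * (1 - x) ^ b * Real.exp (-ρ * x / 2)
      ≤ (ρ ^ (a + 1))⁻¹ / (a + 1) + (a + 2).factorial * 2 ^ (a + 2) * (ρ ^ (a + 1))⁻¹ :=
        add_le_add h1 h2
    _ = (1 / (a + 1) + (a + 2).factorial * 2 ^ (a + 2)) * (ρ ^ (a + 1))⁻¹ := by ring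

/-- **Laplace-type asymptotic (Example 1).** For nonnegative integers `a, b`,
`∫₀¹ x^a (1−x)^b e^{−ρx/2} dx` decays as `ρ^{−(a+1)}` on the exponential
scale: `lim_{ρ→∞} log(∫₀¹ x^a (1−x)^b e^{−ρx/2} dx) / log ρ = −(a+1)`. -/
theorem laplace_asymptotic (a b : ℕ) :
    Tendsto (fun ρ : ℝ =>
        Real.log (∫ x in (0:ℝ)..1, x ^ a * (1 - x) ^ b * Real.exp (-ρ * x / 2)) / Real.log ρ)
      atTop (nhds (-((a : ℝ) + 1))) := by
  set C₁ : ℝ := (1/2 : ℝ) ^ b * Real.exp (-(1/2)) / (a + 1) with hC₁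
  set C₂ : ℝ := 1 / (a + 1) + (a + 2).factorial * 2 ^ (a + 2) with hC₂
  have hC₁pos : 0 < C₁ := by positivity
  have hC₂pos : 0 < C₂ := by positivity
  have hlog : Tendsto Real.log atTop atTop := Real.tendsto_log_atTop
  have hg : ∀ C : ℝ, Tendsto (fun ρ : ℝ => Real.log C / Real.log ρ - ((a:ℝ) + 1))
      atTop (nhds (-((a:ℝ) + 1))) := by
    intro C
    have := (tendsto_const_nhds (x := Real.log C)).div_atTop hlog
    simpa using this.sub_const ((a:ℝ) + 1)
  apply tendsto_of_tendsto_of_tendsto_of_le_of_le' (hg C₁) (hg C₂)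
  · filter_upwards [eventually_ge_atTop (3:ℝ)] with ρ hρ3
    have hρ2 : (2:ℝ) ≤ ρ := by linarith
    have hlogρ : 0 < Real.log ρ := Real.log_pos (by linarith)
    have hI := laplace_lb a b hρ2
    have hI0 : 0 < ∫ x in (0:ℝ)..1, x ^ a * (1 - x) ^ b * Real.exp (-ρ * x / 2) :=
      lt_of_lt_of_le (by positivity) hI
    have hlogle : Real.log (C₁ * (ρ ^ (a + 1))⁻¹) ≤
        Real.log (∫ x in (0:ℝ)..1, x ^ a * (1 - x) ^ b * Real.exp (-ρ * x / 2)) :=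
      Real.log_le_log (by positivity) hI
    rw [Real.log_mul (ne_of_gt hC₁pos) (by positivity), Real.log_inv, Real.log_pow] at hlogle
    have step : Real.log C₁ / Real.log ρ - ((a:ℝ) + 1) =
        (Real.log C₁ + -(((a:ℕ) + 1 : ℕ) * Real.log ρ)) / Real.log ρ := by
      push_cast
      field_simp
      ring
    rw [step]
    exact div_le_div_of_nonneg_right hlogle hlogρ.le
  · filter_upwards [eventually_ge_atTop (3:ℝ)] with ρ hρ3
    have hρ2 : (2:ℝ) ≤ ρ := by linarith
    have hlogρ : 0 < Real.log ρ := Real.log_pos (by linarith)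
    have hI := laplace_ub a b hρ2
    have hIlb := laplace_lb a b hρ2
    have hI0 : 0 < ∫ x in (0:ℝ)..1, x ^ a * (1 - x) ^ b * Real.exp (-ρ * x / 2) :=
      lt_of_lt_of_le (by positivity) hIlb
    have hlogle : Real.log (∫ x in (0:ℝ)..1, x ^ a * (1 - x) ^ b * Real.exp (-ρ * x / 2)) ≤
        Real.log (C₂ * (ρ ^ (a + 1))⁻¹) :=
      Real.log_le_log hI0 hI
    rw [Real.log_mul (ne_of_gt hC₂pos) (by positivity), Real.log_inv, Real.log_pow] at hlogle
    have step : Real.log C₂ / Real.log ρ - ((a:ℝ) + 1) =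
        (Real.log C₂ + -(((a:ℕ) + 1 : ℕ) * Real.log ρ)) / Real.log ρ := by
      push_cast
      field_simp
      ring
    rw [step]
    exact div_le_div_of_nonneg_right hlogle hlogρ.le
end

section
/- (Error exponent of the repetition scheme, Example 1, case m_t+m_r ≤ m.) Let m, m_t, m_r be natural numbers with m_t ≤ m_r and m_t + m_r ≤ m, and define on [0,1]^{m_t} the weight w(λ₁,…,λ_{m_t}) = ∏_{i=1}^{m_t} λ_i^{m_r−m_t} (1−λ_i)^{m−m_r−m_t} · ∏_{i<j} (λ_i − λ_j)². Then lim_{ρ→∞} (1/log ρ) · log ( ∫_{[0,1]^{m_t}} e^{−(ρ/2)∑_{i=1}^{m_t} λ_i} · w dλ / ∫_{[0,1]^{m_t}} w dλ ) = −m_t·m_r; that is, the average pairwise error probability E[exp(−(ρ/2)∑λ_i)] of the repetition scheme under the Jacobi ensemble J(m_r, m−m_r, m_t) decays as ρ^{−m_t·m_r}. -/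
open Filter MeasureTheory

noncomputable section

private lemma two_mul_sum_card_Ioi (n : ℕ) :
    2 * ∑ i : Fin n, (Finset.Ioi i).card = n * (n - 1) := by
  simp only [Fin.card_Ioi]
  rw [Fin.sum_univ_eq_sum_range (fun i => n - 1 - i) n]
  have h := Finset.sum_range_reflect (fun j => j) n
  have h2 := Finset.sum_range_id_mul_two n
  omega

private lemma jacobi_continuous (n a b : ℕ) : Continuous (jacobiWeight n a b) := by
  unfold jacobiWeight
  apply Continuous.mul
  · exact continuous_finset_prod _ fun i _ => by fun_prop
  · exact continuous_finset_prod _ fun i _ => continuous_finset_prod _ fun j _ => by fun_prop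

private lemma cube_compact (n : ℕ) :
    IsCompact (Set.univ.pi fun _ : Fin n => Set.Icc (0:ℝ) 1) :=
  isCompact_univ_pi fun _ => isCompact_Icc

private lemma cube_meas (n : ℕ) :
    MeasurableSet (Set.univ.pi fun _ : Fin n => Set.Icc (0:ℝ) 1) :=
  MeasurableSet.univ_pi fun _ => measurableSet_Icc

private lemma integrand_integrable (n a b : ℕ) (ρ : ℝ) :
    IntegrableOn (fun l : Fin n → ℝ =>
        Real.exp (-(ρ / 2) * ∑ i, l i) * jacobiWeight n a b l)
      (Set.univ.pi fun _ : Fin n => Set.Icc (0:ℝ) 1) volume := by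
  apply ContinuousOn.integrableOn_compact (cube_compact n)
  exact (Continuous.mul (by fun_prop) (jacobi_continuous n a b)).continuousOn

private lemma jacobi_nonneg (n a b : ℕ) {l : Fin n → ℝ}
    (h0 : ∀ i, 0 ≤ l i) (h1 : ∀ i, l i ≤ 1) : 0 ≤ jacobiWeight n a b l := by
  unfold jacobiWeight
  apply mul_nonneg
  · exact Finset.prod_nonneg fun i _ =>
      mul_nonneg (pow_nonneg (h0 i) _) (pow_nonneg (by linarith [h1 i]) _)
  · exact Finset.prod_nonneg fun i _ => Finset.prod_nonneg fun j _ => sq_nonneg _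


private lemma jacobi_le_sum_pow (n a b : ℕ) {l : Fin n → ℝ}
    (h0 : ∀ i, 0 ≤ l i) (h1 : ∀ i, l i ≤ 1) :
    jacobiWeight n a b l
      ≤ (∑ i, l i) ^ (n * a + 2 * ∑ i : Fin n, (Finset.Ioi i).card) := by
  set s := ∑ i, l i with hs
  have hs0 : 0 ≤ s := Finset.sum_nonneg fun i _ => h0 i
  have hle : ∀ i, l i ≤ s := fun i =>
    Finset.single_le_sum (fun j _ => h0 j) (Finset.mem_univ i)
  rw [pow_add]
  unfold jacobiWeight
  apply mul_le_mul
  · calc ∏ i, l i ^ a * (1 - l i) ^ b ≤ ∏ _i : Fin n, s ^ a := by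
          apply Finset.prod_le_prod
          · intro i _
            exact mul_nonneg (pow_nonneg (h0 i) _) (pow_nonneg (by linarith [h1 i]) _)
          · intro i _
            have hb : (1 - l i) ^ b ≤ 1 :=
              pow_le_one₀ (by linarith [h1 i]) (by linarith [h0 i])
            calc l i ^ a * (1 - l i) ^ b ≤ l i ^ a * 1 :=
                  mul_le_mul_of_nonneg_left hb (pow_nonneg (h0 i) _)
              _ = l i ^ a := mul_one _
              _ ≤ s ^ a := pow_le_pow_left₀ (h0 i) (hle i) a
      _ = s ^ (n * a) := by
          rw [Finset.prod_const, Finset.card_univ, Fintype.card_fin, ← pow_mul, Nat.mul_comm]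
  · calc ∏ i, ∏ j ∈ Finset.Ioi i, (l i - l j) ^ 2
        ≤ ∏ i : Fin n, ∏ _j ∈ Finset.Ioi i, s ^ 2 := by
          apply Finset.prod_le_prod
          · intro i _; exact Finset.prod_nonneg fun j _ => sq_nonneg _
          · intro i _
            apply Finset.prod_le_prod (fun j _ => sq_nonneg _)
            intro j _
            exact sq_le_sq' (by linarith [hle j, h0 i]) (by linarith [hle i, h0 j])
      _ = s ^ (2 * ∑ i : Fin n, (Finset.Ioi i).card) := by
          simp_rw [Finset.prod_const, ← pow_mul, Finset.prod_pow_eq_pow_sum,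
            Finset.mul_sum]
  · exact Finset.prod_nonneg fun i _ => Finset.prod_nonneg fun j _ => sq_nonneg _
  · exact pow_nonneg hs0 _

private lemma pointwise_upper (n a b : ℕ) {ρ : ℝ} (hρ : 0 < ρ) {l : Fin n → ℝ}
    (h0 : ∀ i, 0 ≤ l i) (h1 : ∀ i, l i ≤ 1) :
    Real.exp (-(ρ / 2) * ∑ i, l i) * jacobiWeight n a b l
      ≤ ((n * a + 2 * ∑ i : Fin n, (Finset.Ioi i).card).factorial : ℝ)
        * (4 / ρ) ^ (n * a + 2 * ∑ i : Fin n, (Finset.Ioi i).card)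
        * Real.exp (-(ρ / 4) * ∑ i, l i) := by
  set D := n * a + 2 * ∑ i : Fin n, (Finset.Ioi i).card with hD
  set s := ∑ i, l i with hs
  have hs0 : 0 ≤ s := Finset.sum_nonneg fun i _ => h0 i
  have hsplit : Real.exp (-(ρ / 2) * s)
      = Real.exp (-(ρ / 4) * s) * Real.exp (-(ρ / 4) * s) := by
    rw [← Real.exp_add]; ring_nf
  have hw : jacobiWeight n a b l ≤ s ^ D := jacobi_le_sum_pow n a b h0 h1
  have hwn : 0 ≤ jacobiWeight n a b l := by
    unfold jacobiWeight
    exact mul_nonneg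
      (Finset.prod_nonneg fun i _ =>
        mul_nonneg (pow_nonneg (h0 i) _) (pow_nonneg (by linarith [h1 i]) _))
      (Finset.prod_nonneg fun i _ => Finset.prod_nonneg fun j _ => sq_nonneg _)
  have key : Real.exp (-(ρ / 4) * s) * s ^ D ≤ (D.factorial : ℝ) * (4 / ρ) ^ D := by
    set x := ρ / 4 * s with hx
    have hx0 : 0 ≤ x := by positivity
    have hsx : s = 4 / ρ * x := by rw [hx]; field_simp
    have hpow : x ^ D ≤ (D.factorial : ℝ) * Real.exp x := by
      have h := Real.pow_div_factorial_le_exp x hx0 D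
      rw [div_le_iff₀ (by positivity)] at h
      linarith [h]
    have : Real.exp (-x) * x ^ D ≤ (D.factorial : ℝ) := by
      calc Real.exp (-x) * x ^ D ≤ Real.exp (-x) * ((D.factorial : ℝ) * Real.exp x) :=
            mul_le_mul_of_nonneg_left hpow (Real.exp_nonneg _)
        _ = (D.factorial : ℝ) := by rw [← mul_assoc, mul_comm (Real.exp (-x)),
              mul_assoc, ← Real.exp_add, neg_add_cancel, Real.exp_zero, mul_one]
    have harg : -(ρ / 4) * s = -x := by rw [hx]; ring
    have hsD : s ^ D = (4 / ρ) ^ D * x ^ D := by rw [hsx, mul_pow]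
    calc Real.exp (-(ρ / 4) * s) * s ^ D
        = Real.exp (-x) * ((4 / ρ) ^ D * x ^ D) := by rw [harg, hsD]
      _ = (4 / ρ) ^ D * (Real.exp (-x) * x ^ D) := by ring
      _ ≤ (4 / ρ) ^ D * (D.factorial : ℝ) :=
          mul_le_mul_of_nonneg_left this (by positivity)
      _ = (D.factorial : ℝ) * (4 / ρ) ^ D := mul_comm _ _
  calc Real.exp (-(ρ / 2) * s) * jacobiWeight n a b l
      = Real.exp (-(ρ / 4) * s) * (Real.exp (-(ρ / 4) * s) * jacobiWeight n a b l) := by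
        rw [hsplit]; ring
    _ ≤ Real.exp (-(ρ / 4) * s) * (Real.exp (-(ρ / 4) * s) * s ^ D) := by
        apply mul_le_mul_of_nonneg_left _ (Real.exp_nonneg _)
        exact mul_le_mul_of_nonneg_left hw (Real.exp_nonneg _)
    _ ≤ Real.exp (-(ρ / 4) * s) * ((D.factorial : ℝ) * (4 / ρ) ^ D) :=
        mul_le_mul_of_nonneg_left key (Real.exp_nonneg _)
    _ = (D.factorial : ℝ) * (4 / ρ) ^ D * Real.exp (-(ρ / 4) * s) := by ring

private lemma integral_cube_prod (n : ℕ) (f : ℝ → ℝ) :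
    ∫ l in Set.univ.pi fun _ : Fin n => Set.Icc (0:ℝ) 1, ∏ i, f (l i)
      = (∫ x in Set.Icc (0:ℝ) 1, f x) ^ n := by
  rw [← integral_indicator (cube_meas n)]
  have h : ∀ l : Fin n → ℝ,
      (Set.univ.pi fun _ : Fin n => Set.Icc (0:ℝ) 1).indicator
        (fun l : Fin n → ℝ => ∏ i, f (l i)) l
      = ∏ i, (Set.Icc (0:ℝ) 1).indicator f (l i) := by
    intro l
    by_cases hmem : l ∈ Set.univ.pi fun _ : Fin n => Set.Icc (0:ℝ) 1
    · rw [Set.indicator_of_mem hmem]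
      exact Finset.prod_congr rfl fun i _ =>
        (Set.indicator_of_mem (hmem i (Set.mem_univ i)) f).symm
    · rw [Set.indicator_of_notMem hmem]
      rw [Set.mem_univ_pi] at hmem
      push_neg at hmem
      obtain ⟨i, hi⟩ := hmem
      exact (Finset.prod_eq_zero (Finset.mem_univ i)
        (Set.indicator_of_notMem hi f)).symm
  simp_rw [h]
  rw [volume_pi, MeasureTheory.integral_fintype_prod_eq_pow
    ((Set.Icc (0:ℝ) 1).indicator f), integral_indicator measurableSet_Icc,
    Fintype.card_fin]

private lemma integral_exp_Icc_le {c : ℝ} (hc : 0 < c) :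
    ∫ x in Set.Icc (0:ℝ) 1, Real.exp (-c * x) ≤ 1 / c := by
  rw [MeasureTheory.integral_Icc_eq_integral_Ioc,
    ← intervalIntegral.integral_of_le (zero_le_one' ℝ)]
  have h1 : ∀ x : ℝ, Real.exp (-c * x) = (fun y => Real.exp (-y)) (c * x) := by
    intro x; simp [neg_mul]
  simp_rw [h1]
  rw [intervalIntegral.integral_comp_mul_left (fun y => Real.exp (-y)) hc.ne']
  rw [intervalIntegral.integral_comp_neg (fun y => Real.exp y)]
  rw [integral_exp]
  rw [mul_zero, mul_one, neg_zero, Real.exp_zero, smul_eq_mul]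
  have : Real.exp (-c) ≥ 0 := Real.exp_nonneg _
  rw [one_div]
  have hinv : (0:ℝ) ≤ c⁻¹ := by positivity
  nlinarith [Real.exp_nonneg (-c)]

private lemma integral_upper (n a b : ℕ) {ρ : ℝ} (hρ : 0 < ρ) :
    ∫ l in Set.univ.pi fun _ : Fin n => Set.Icc (0:ℝ) 1,
        Real.exp (-(ρ / 2) * ∑ i, l i) * jacobiWeight n a b l
      ≤ ((n * a + 2 * ∑ i : Fin n, (Finset.Ioi i).card).factorial : ℝ)
        * 4 ^ (n * a + 2 * ∑ i : Fin n, (Finset.Ioi i).card + n)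
        / ρ ^ (n * a + 2 * ∑ i : Fin n, (Finset.Ioi i).card + n) := by
  set D := n * a + 2 * ∑ i : Fin n, (Finset.Ioi i).card with hD
  have hconst : Continuous fun l : Fin n → ℝ =>
      ((D.factorial : ℝ) * (4 / ρ) ^ D) * Real.exp (-(ρ / 4) * ∑ i, l i) := by fun_prop
  have step1 : ∫ l in Set.univ.pi fun _ : Fin n => Set.Icc (0:ℝ) 1,
        Real.exp (-(ρ / 2) * ∑ i, l i) * jacobiWeight n a b l
      ≤ ∫ l in Set.univ.pi fun _ : Fin n => Set.Icc (0:ℝ) 1,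
        ((D.factorial : ℝ) * (4 / ρ) ^ D) * Real.exp (-(ρ / 4) * ∑ i, l i) := by
    apply setIntegral_mono_on (integrand_integrable n a b ρ)
      (hconst.continuousOn.integrableOn_compact (cube_compact n)) (cube_meas n)
    intro l hl
    have h0 : ∀ i, 0 ≤ l i := fun i => (hl i (Set.mem_univ i)).1
    have h1 : ∀ i, l i ≤ 1 := fun i => (hl i (Set.mem_univ i)).2
    exact pointwise_upper n a b hρ h0 h1
  have step2 : ∫ l in Set.univ.pi fun _ : Fin n => Set.Icc (0:ℝ) 1,
        ((D.factorial : ℝ) * (4 / ρ) ^ D) * Real.exp (-(ρ / 4) * ∑ i, l i)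
      = ((D.factorial : ℝ) * (4 / ρ) ^ D)
        * (∫ x in Set.Icc (0:ℝ) 1, Real.exp (-(ρ / 4) * x)) ^ n := by
    rw [integral_const_mul]
    congr 1
    have hprod : ∀ l : Fin n → ℝ, Real.exp (-(ρ / 4) * ∑ i, l i)
        = ∏ i, Real.exp (-(ρ / 4) * l i) := by
      intro l
      rw [← Real.exp_sum, ← Finset.mul_sum]
    simp_rw [hprod]
    exact integral_cube_prod n fun x => Real.exp (-(ρ / 4) * x)
  have hint_nonneg : 0 ≤ ∫ x in Set.Icc (0:ℝ) 1, Real.exp (-(ρ / 4) * x) :=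
    setIntegral_nonneg measurableSet_Icc fun x _ => Real.exp_nonneg _
  have hint_le : ∫ x in Set.Icc (0:ℝ) 1, Real.exp (-(ρ / 4) * x) ≤ 4 / ρ := by
    have := integral_exp_Icc_le (c := ρ / 4) (by positivity)
    have h4 : 1 / (ρ / 4) = 4 / ρ := by field_simp
    linarith [this, h4.le]
  calc ∫ l in Set.univ.pi fun _ : Fin n => Set.Icc (0:ℝ) 1,
        Real.exp (-(ρ / 2) * ∑ i, l i) * jacobiWeight n a b l
      ≤ ((D.factorial : ℝ) * (4 / ρ) ^ D)
        * (∫ x in Set.Icc (0:ℝ) 1, Real.exp (-(ρ / 4) * x)) ^ n := by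
        rw [← step2]; exact step1
    _ ≤ ((D.factorial : ℝ) * (4 / ρ) ^ D) * (4 / ρ) ^ n := by
        apply mul_le_mul_of_nonneg_left _ (by positivity)
        exact pow_le_pow_left₀ hint_nonneg hint_le n
    _ = (D.factorial : ℝ) * 4 ^ (D + n) / ρ ^ (D + n) := by
        rw [mul_assoc, ← pow_add, div_pow, mul_div_assoc]

private lemma integral_lower (n a b : ℕ) {ρ : ℝ} (hρ : (4 * ((n:ℝ) + 1)) ≤ ρ) :
    Real.exp (-(n:ℝ)^2) * (1/2) ^ (n * b)
        / ρ ^ (n * a + 2 * ∑ i : Fin n, (Finset.Ioi i).card + n)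
      ≤ ∫ l in Set.univ.pi fun _ : Fin n => Set.Icc (0:ℝ) 1,
          Real.exp (-(ρ / 2) * ∑ i, l i) * jacobiWeight n a b l := by
  set D := n * a + 2 * ∑ i : Fin n, (Finset.Ioi i).card with hD
  have hρ0 : (0:ℝ) < ρ := lt_of_lt_of_le (by positivity) hρ
  set B : Set (Fin n → ℝ) :=
    Set.univ.pi fun i : Fin n => Set.Icc ((2*(i:ℝ)+1)/ρ) ((2*(i:ℝ)+2)/ρ) with hB
  have hBmeas : MeasurableSet B := MeasurableSet.univ_pi fun _ => measurableSet_Icc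
  have hin : ∀ i : Fin n, (i:ℝ) ≤ (n:ℝ) - 1 := by
    intro i
    have h : ((i:ℕ):ℝ) + 1 ≤ (n:ℝ) := by exact_mod_cast Nat.succ_le_of_lt i.isLt
    linarith
  have hnρ : 2 * (n:ℝ) ≤ ρ := by
    have hn0 : (0:ℝ) ≤ n := Nat.cast_nonneg n
    linarith
  -- bounds for points of B
  have hlo : ∀ l ∈ B, ∀ i : Fin n, (2*(i:ℝ)+1)/ρ ≤ l i :=
    fun l hl i => (hl i (Set.mem_univ i)).1
  have hhi : ∀ l ∈ B, ∀ i : Fin n, l i ≤ (2*(i:ℝ)+2)/ρ :=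
    fun l hl i => (hl i (Set.mem_univ i)).2
  have hl_lo : ∀ l ∈ B, ∀ i, 1/ρ ≤ l i := by
    intro l hl i
    refine le_trans ?_ (hlo l hl i)
    gcongr
    have h0 : (0:ℝ) ≤ (i:ℝ) := Nat.cast_nonneg _
    linarith
  have hl_up : ∀ l ∈ B, ∀ i, l i ≤ 2*(n:ℝ)/ρ := by
    intro l hl i
    refine le_trans (hhi l hl i) ?_
    gcongr
    linarith [hin i]
  have hl_half : ∀ l ∈ B, ∀ i, l i ≤ 1/2 := by
    intro l hl i
    refine le_trans (hl_up l hl i) ?_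
    rw [div_le_div_iff₀ hρ0 (by norm_num)]
    linarith [Nat.cast_nonneg (α := ℝ) n]
  have hBsub : B ⊆ Set.univ.pi fun _ : Fin n => Set.Icc (0:ℝ) 1 := by
    intro l hl i _
    constructor
    · exact le_trans (by positivity) (hl_lo l hl i)
    · exact le_trans (hl_half l hl i) (by norm_num)
  -- pointwise lower bound on B
  have hpoint : ∀ l ∈ B,
      Real.exp (-(n:ℝ)^2) * ((1/ρ) ^ (n*a) * (1/2) ^ (n*b) * (1/ρ) ^ (2 * ∑ i : Fin n, (Finset.Ioi i).card))
        ≤ Real.exp (-(ρ / 2) * ∑ i, l i) * jacobiWeight n a b l := by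
    intro l hl
    have hexp : Real.exp (-(n:ℝ)^2) ≤ Real.exp (-(ρ / 2) * ∑ i, l i) := by
      apply Real.exp_le_exp.2
      have hsum : ∑ i, l i ≤ (n:ℝ) * (2*(n:ℝ)/ρ) := by
        calc ∑ i, l i ≤ ∑ _i : Fin n, 2*(n:ℝ)/ρ :=
              Finset.sum_le_sum fun i _ => hl_up l hl i
          _ = (n:ℝ) * (2*(n:ℝ)/ρ) := by
              rw [Finset.sum_const, Finset.card_univ, Fintype.card_fin, nsmul_eq_mul]
      have h1 : (ρ/2) * ∑ i, l i ≤ (n:ℝ)^2 := by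
        calc (ρ/2) * ∑ i, l i ≤ (ρ/2) * ((n:ℝ) * (2*(n:ℝ)/ρ)) := by
              apply mul_le_mul_of_nonneg_left hsum (by positivity)
          _ = (n:ℝ)^2 := by field_simp
      linarith
    have hA : (1/ρ) ^ (n*a) * (1/2) ^ (n*b) ≤ ∏ i, l i ^ a * (1 - l i) ^ b := by
      calc (1/ρ) ^ (n*a) * (1/2) ^ (n*b)
          = ∏ _i : Fin n, (1/ρ) ^ a * (1/2) ^ b := by
            rw [Finset.prod_const, Finset.card_univ, Fintype.card_fin, mul_pow,
              ← pow_mul, ← pow_mul, Nat.mul_comm a n, Nat.mul_comm b n]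
        _ ≤ ∏ i, l i ^ a * (1 - l i) ^ b := by
            apply Finset.prod_le_prod
            · intro i _; positivity
            · intro i _
              apply mul_le_mul
              · exact pow_le_pow_left₀ (by positivity) (hl_lo l hl i) a
              · apply pow_le_pow_left₀ (by norm_num)
                linarith [hl_half l hl i]
              · positivity
              · exact pow_nonneg (le_trans (by positivity) (hl_lo l hl i)) a
    have hV : (1/ρ) ^ (2 * ∑ i : Fin n, (Finset.Ioi i).card)
        ≤ ∏ i, ∏ j ∈ Finset.Ioi i, (l i - l j) ^ 2 := by
      calc (1/ρ) ^ (2 * ∑ i : Fin n, (Finset.Ioi i).card)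
          = ∏ i : Fin n, ∏ _j ∈ Finset.Ioi i, (1/ρ) ^ 2 := by
            simp_rw [Finset.prod_const, ← pow_mul, Finset.prod_pow_eq_pow_sum,
              Finset.mul_sum]
        _ ≤ ∏ i, ∏ j ∈ Finset.Ioi i, (l i - l j) ^ 2 := by
            apply Finset.prod_le_prod
            · intro i _; apply Finset.prod_nonneg; intro j _; positivity
            · intro i _
              apply Finset.prod_le_prod
              · intro j _; positivity
              · intro j hj
                rw [Finset.mem_Ioi] at hj
                have hij : ((i:ℕ):ℝ) + 1 ≤ ((j:ℕ):ℝ) := by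
                  exact_mod_cast Nat.succ_le_of_lt hj
                have hgap : 1/ρ ≤ l j - l i := by
                  have h1 := hhi l hl i
                  have h2 := hlo l hl j
                  have : (2*(i:ℝ)+2)/ρ + 1/ρ ≤ (2*(j:ℝ)+1)/ρ := by
                    rw [← add_div, div_le_div_iff₀ hρ0 hρ0]
                    have : (2*(i:ℝ)+2) + 1 ≤ 2*(j:ℝ)+1 := by
                      linarith
                    nlinarith
                  linarith
                have hsq : (l i - l j)^2 = (l j - l i)^2 := by ring
                rw [hsq]
                exact pow_le_pow_left₀ (by positivity) hgap 2
    calc Real.exp (-(n:ℝ)^2) * ((1/ρ) ^ (n*a) * (1/2) ^ (n*b) * (1/ρ) ^ (2 * ∑ i : Fin n, (Finset.Ioi i).card))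
        ≤ Real.exp (-(ρ / 2) * ∑ i, l i) * ((∏ i, l i ^ a * (1 - l i) ^ b) * ∏ i, ∏ j ∈ Finset.Ioi i, (l i - l j) ^ 2) := by
          apply mul_le_mul hexp _ _ (Real.exp_nonneg _)
          · refine mul_le_mul hA hV (by positivity) (Finset.prod_nonneg fun i _ => ?_)
            have h0i : (0:ℝ) ≤ l i := le_trans (by positivity) (hl_lo l hl i)
            have h1i : (0:ℝ) ≤ 1 - l i := by linarith [hl_half l hl i]
            exact mul_nonneg (pow_nonneg h0i a) (pow_nonneg h1i b)
          · positivity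
      _ = Real.exp (-(ρ / 2) * ∑ i, l i) * jacobiWeight n a b l := rfl
  -- volume of B
  have hvol : volume B = (ENNReal.ofReal (1/ρ)) ^ n := by
    rw [hB, volume_pi_pi]
    have : ∀ i : Fin n, volume (Set.Icc ((2*(i:ℝ)+1)/ρ) ((2*(i:ℝ)+2)/ρ))
        = ENNReal.ofReal (1/ρ) := by
      intro i
      rw [Real.volume_Icc]
      congr 1
      rw [div_sub_div_same]
      ring_nf
    simp_rw [this, Finset.prod_const, Finset.card_univ, Fintype.card_fin]
  -- chain of inequalities
  have hint : IntegrableOn (fun l : Fin n → ℝ =>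
        Real.exp (-(ρ / 2) * ∑ i, l i) * jacobiWeight n a b l)
      (Set.univ.pi fun _ : Fin n => Set.Icc (0:ℝ) 1) volume := integrand_integrable n a b ρ
  have step1 : ∫ l in B, Real.exp (-(ρ / 2) * ∑ i, l i) * jacobiWeight n a b l
      ≤ ∫ l in Set.univ.pi fun _ : Fin n => Set.Icc (0:ℝ) 1,
          Real.exp (-(ρ / 2) * ∑ i, l i) * jacobiWeight n a b l := by
    apply setIntegral_mono_set hint
    · refine (ae_restrict_iff' (cube_meas n)).2 (Filter.Eventually.of_forall ?_)
      intro l hl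
      exact mul_nonneg (Real.exp_nonneg _)
        (jacobi_nonneg n a b (fun i => (hl i (Set.mem_univ i)).1)
          (fun i => (hl i (Set.mem_univ i)).2))
    · exact Filter.Eventually.of_forall fun l hl => hBsub hl
  have hintB : IntegrableOn (fun l : Fin n → ℝ =>
        Real.exp (-(ρ / 2) * ∑ i, l i) * jacobiWeight n a b l) B volume :=
    hint.mono_set hBsub
  have hvolB_fin : volume B < ⊤ := by
    rw [hvol]
    exact ENNReal.pow_lt_top ENNReal.ofReal_lt_top
  have step2 : (Real.exp (-(n:ℝ)^2) * ((1/ρ) ^ (n*a) * (1/2) ^ (n*b)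
          * (1/ρ) ^ (2 * ∑ i : Fin n, (Finset.Ioi i).card))) * (1/ρ)^n
      ≤ ∫ l in B, Real.exp (-(ρ / 2) * ∑ i, l i) * jacobiWeight n a b l := by
    have hconst : ∫ _l in B, (Real.exp (-(n:ℝ)^2) * ((1/ρ) ^ (n*a) * (1/2) ^ (n*b)
          * (1/ρ) ^ (2 * ∑ i : Fin n, (Finset.Ioi i).card))) ∂volume
        = (Real.exp (-(n:ℝ)^2) * ((1/ρ) ^ (n*a) * (1/2) ^ (n*b)
          * (1/ρ) ^ (2 * ∑ i : Fin n, (Finset.Ioi i).card))) * (1/ρ)^n := by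
      rw [setIntegral_const, measureReal_def, hvol, smul_eq_mul, mul_comm]
      congr 1
      rw [ENNReal.toReal_pow, ENNReal.toReal_ofReal (by positivity)]
    rw [← hconst]
    apply setIntegral_mono_on (integrableOn_const hvolB_fin.ne) hintB hBmeas
    exact hpoint
  have hfinal : Real.exp (-(n:ℝ)^2) * (1/2) ^ (n * b) / ρ ^ (D + n)
      = (Real.exp (-(n:ℝ)^2) * ((1/ρ) ^ (n*a) * (1/2) ^ (n*b)
          * (1/ρ) ^ (2 * ∑ i : Fin n, (Finset.Ioi i).card))) * (1/ρ)^n := by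
    rw [hD]
    rw [div_eq_mul_inv, ← inv_pow]
    simp only [one_div]
    ring
  rw [hfinal]
  exact le_trans step2 step1

private lemma Z_pos (n a b : ℕ) :
    0 < ∫ l in Set.univ.pi fun _ : Fin n => Set.Icc (0:ℝ) 1, jacobiWeight n a b l := by
  set ρ0 : ℝ := 4 * ((n:ℝ) + 1) with hρ0def
  have hρ0 : (0:ℝ) < ρ0 := by positivity
  have h := integral_lower n a b (le_refl ρ0)
  have hmono : ∫ l in Set.univ.pi fun _ : Fin n => Set.Icc (0:ℝ) 1,
        Real.exp (-(ρ0 / 2) * ∑ i, l i) * jacobiWeight n a b l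
      ≤ ∫ l in Set.univ.pi fun _ : Fin n => Set.Icc (0:ℝ) 1, jacobiWeight n a b l := by
    apply setIntegral_mono_on (integrand_integrable n a b ρ0)
      ((jacobi_continuous n a b).continuousOn.integrableOn_compact (cube_compact n))
      (cube_meas n)
    intro l hl
    have h0 : ∀ i, 0 ≤ l i := fun i => (hl i (Set.mem_univ i)).1
    have h1 : ∀ i, l i ≤ 1 := fun i => (hl i (Set.mem_univ i)).2
    have hw := jacobi_nonneg n a b h0 h1
    have hexp : Real.exp (-(ρ0 / 2) * ∑ i, l i) ≤ 1 := by
      apply Real.exp_le_one_iff.2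
      have hs : 0 ≤ ∑ i, l i := Finset.sum_nonneg fun i _ => h0 i
      have : 0 ≤ (ρ0/2) * ∑ i, l i := by positivity
      linarith
    calc Real.exp (-(ρ0 / 2) * ∑ i, l i) * jacobiWeight n a b l
        ≤ 1 * jacobiWeight n a b l := mul_le_mul_of_nonneg_right hexp hw
      _ = jacobiWeight n a b l := one_mul _
  refine lt_of_lt_of_le (lt_of_lt_of_le ?_ h) hmono
  positivity

private lemma exponent_eq' (n a : ℕ) : n * a + n * (n - 1) + n = n * (a + n) := by
  cases n with
  | zero => simp
  | succ k =>
    simp only [Nat.succ_sub_one]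
    ring

private lemma squeeze_aux (n a b : ℕ) :
    ∃ cl cu : ℝ, 0 < cl ∧ 0 < cu ∧ ∀ ρ : ℝ, 4 * ((n:ℝ) + 1) ≤ ρ →
      cl / ρ ^ (n * (a + n)) ≤ (∫ l in Set.univ.pi fun _ : Fin n => Set.Icc (0:ℝ) 1,
          Real.exp (-(ρ / 2) * ∑ i, l i) * jacobiWeight n a b l)
      ∧ (∫ l in Set.univ.pi fun _ : Fin n => Set.Icc (0:ℝ) 1,
          Real.exp (-(ρ / 2) * ∑ i, l i) * jacobiWeight n a b l)
        ≤ cu / ρ ^ (n * (a + n)) := by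
  have hexp : n * a + 2 * ∑ i : Fin n, (Finset.Ioi i).card + n = n * (a + n) := by
    rw [two_mul_sum_card_Ioi]
    exact exponent_eq' n a
  refine ⟨Real.exp (-(n:ℝ)^2) * (1/2) ^ (n * b),
    ((n * a + 2 * ∑ i : Fin n, (Finset.Ioi i).card).factorial : ℝ)
      * 4 ^ (n * (a + n)), by positivity, by positivity, fun ρ hρ => ⟨?_, ?_⟩⟩
  · have h := integral_lower n a b hρ
    rwa [hexp] at h
  · have hρ0 : (0:ℝ) < ρ := lt_of_lt_of_le (by positivity) hρ
    have h := integral_upper n a b (ρ := ρ) hρ0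
    rwa [hexp] at h

/-- **Error exponent of the repetition scheme (Example 1, case `m_t+m_r ≤ m`).**
The average pairwise error probability `E[exp(−(ρ/2)∑λᵢ)]` under the Jacobi
ensemble `J(m_r, m−m_r, m_t)` (whose unordered-eigenvalue density on
`[0,1]^{m_t}` is proportional to
`∏ᵢ λᵢ^{m_r−m_t}(1−λᵢ)^{m−m_r−m_t} ∏_{i<j}(λᵢ−λⱼ)²`) decays as
`ρ^{−m_t·m_r}`. -/
theorem repetition_scheme_error_exponent (m mt mr : ℕ) (hmt : mt ≤ mr) (hsum : mt + mr ≤ m) :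
    Tendsto (fun ρ : ℝ => (1 / Real.log ρ) *
        Real.log ((∫ l in Set.univ.pi fun _ : Fin mt => Set.Icc (0:ℝ) 1,
              Real.exp (-(ρ / 2) * ∑ i, l i) * jacobiWeight mt (mr - mt) (m - mr - mt) l)
          / ∫ l in Set.univ.pi fun _ : Fin mt => Set.Icc (0:ℝ) 1,
              jacobiWeight mt (mr - mt) (m - mr - mt) l))
      atTop (nhds (-((mt : ℝ) * (mr : ℝ)))) := by
  obtain ⟨cl, cu, hcl, hcu, hbound⟩ := squeeze_aux mt (mr - mt) (m - mr - mt)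
  have hZ : 0 < ∫ l in Set.univ.pi fun _ : Fin mt => Set.Icc (0:ℝ) 1,
      jacobiWeight mt (mr - mt) (m - mr - mt) l := Z_pos mt (mr - mt) (m - mr - mt)
  set Z := ∫ l in Set.univ.pi fun _ : Fin mt => Set.Icc (0:ℝ) 1,
      jacobiWeight mt (mr - mt) (m - mr - mt) l with hZdef
  set K : ℕ := mt * ((mr - mt) + mt) with hK
  have hKR : ((K:ℕ):ℝ) = (mt:ℝ) * (mr:ℝ) := by
    rw [hK, Nat.sub_add_cancel hmt]
    push_cast
    ring
  have hgoal : -((mt:ℝ) * (mr:ℝ)) = -((K:ℕ):ℝ) := by rw [hKR]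
  rw [hgoal]
  have hlim : ∀ x : ℝ, Tendsto (fun ρ : ℝ => x * (Real.log ρ)⁻¹ - (K:ℝ))
      atTop (nhds (-(K:ℝ))) := by
    intro x
    have h1 : Tendsto (fun ρ : ℝ => (Real.log ρ)⁻¹) atTop (nhds 0) :=
      Real.tendsto_log_atTop.inv_tendsto_atTop
    have h2 := (h1.const_mul x).sub_const (K:ℝ)
    simpa using h2
  apply tendsto_of_tendsto_of_tendsto_of_le_of_le'
    (hlim (Real.log cl - Real.log Z)) (hlim (Real.log cu - Real.log Z))
  · filter_upwards [eventually_ge_atTop (4 * ((mt:ℝ) + 1))] with ρ hρ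
    have hmt0 : (0:ℝ) ≤ (mt:ℝ) := Nat.cast_nonneg mt
    have hρ1 : (1:ℝ) < ρ := by linarith
    have hρ0 : (0:ℝ) < ρ := by linarith
    have hlogρ : 0 < Real.log ρ := Real.log_pos hρ1
    obtain ⟨hlo', hhi'⟩ := hbound ρ hρ
    set I := ∫ l in Set.univ.pi fun _ : Fin mt => Set.Icc (0:ℝ) 1,
        Real.exp (-(ρ / 2) * ∑ i, l i) * jacobiWeight mt (mr - mt) (m - mr - mt) l with hI
    have hIpos : 0 < I := lt_of_lt_of_le (by positivity) hlo'
    have h1 : cl / ρ ^ K / Z ≤ I / Z := by gcongr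
    have h2 := Real.log_le_log (by positivity) h1
    rw [Real.log_div (by positivity : (0:ℝ) < cl / ρ ^ K).ne' hZ.ne',
      Real.log_div hcl.ne' (by positivity : (0:ℝ) < ρ ^ K).ne',
      Real.log_pow] at h2
    have h3 : (Real.log cl - Real.log Z) * (Real.log ρ)⁻¹ - (K:ℝ)
        = (1 / Real.log ρ) * (Real.log cl - (K:ℝ) * Real.log ρ - Real.log Z) := by
      field_simp
      ring
    rw [h3]
    apply mul_le_mul_of_nonneg_left _ (by positivity : (0:ℝ) ≤ 1 / Real.log ρ)
    linarith
  · filter_upwards [eventually_ge_atTop (4 * ((mt:ℝ) + 1))] with ρ hρ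
    have hmt0 : (0:ℝ) ≤ (mt:ℝ) := Nat.cast_nonneg mt
    have hρ1 : (1:ℝ) < ρ := by linarith
    have hρ0 : (0:ℝ) < ρ := by linarith
    have hlogρ : 0 < Real.log ρ := Real.log_pos hρ1
    obtain ⟨hlo', hhi'⟩ := hbound ρ hρ
    set I := ∫ l in Set.univ.pi fun _ : Fin mt => Set.Icc (0:ℝ) 1,
        Real.exp (-(ρ / 2) * ∑ i, l i) * jacobiWeight mt (mr - mt) (m - mr - mt) l with hI
    have hIpos : 0 < I := lt_of_lt_of_le (by positivity) hlo'
    have h1 : I / Z ≤ cu / ρ ^ K / Z := by gcongr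
    have h2 := Real.log_le_log (by positivity) h1
    rw [Real.log_div (by positivity : (0:ℝ) < cu / ρ ^ K).ne' hZ.ne',
      Real.log_div hcu.ne' (by positivity : (0:ℝ) < ρ ^ K).ne',
      Real.log_pow] at h2
    have h3 : (Real.log cu - Real.log Z) * (Real.log ρ)⁻¹ - (K:ℝ)
        = (1 / Real.log ρ) * (Real.log cu - (K:ℝ) * Real.log ρ - Real.log Z) := by
      field_simp
      ring
    rw [h3]
    apply mul_le_mul_of_nonneg_left _ (by positivity : (0:ℝ) ≤ 1 / Real.log ρ)
    linarith
end
end
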